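/- arXiv:1607.03455 — 3 statements merged into one kernel-verified Lean document; each statement's English description precedes it below -/
import Mathlib

section
/- The coupled Dynkin process witnesses the convergence bound: let N > 10 and let s₁, s₂ be integers with 1 ≤ s₁ ≤ 10 and 1 ≤ s₂ ≤ 10. Then g^{(2N)}(s₁, s₂) is a coupling of f^{(N)}(s₁) and f^{(N)}(s₂), and Pr_{(x₁,x₂)∼g^{(2N)}(s₁,s₂)}[x₁ ≠ x₂] ≤ (9/10)^{N/5 - 2}, where the exponent N/5 - 2 is a real number. -/
open scoped ENNReal

/-- A coupling of `μ₁` and `μ₂` is a distribution on pairs whose marginals are `μ₁` and `μ₂`. -/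
def IsCoupling {A B : Type*} (μ : PMF (A × B)) (μ₁ : PMF A) (μ₂ : PMF B) : Prop :=
  μ.map Prod.fst = μ₁ ∧ μ.map Prod.snd = μ₂

/-- Probability of an event under a PMF, as a real number. -/
noncomputable def PMF.pr {α : Type*} (μ : PMF α) (E : Set α) : ℝ :=
  (μ.toOuterMeasure E).toReal

/-- `iter f t s` is the `t`-fold monadic iterate of `f` starting from the point mass at `s`. -/
noncomputable def iter {Ω : Type*} (f : Ω → PMF Ω) : ℕ → Ω → PMF Ω
  | 0, s => PMF.pure s
  | t + 1, s => (iter f t s).bind f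

/-- One step of the Dynkin process with endpoint `N`: from `x < N`, jump forward by a
uniformly random amount in `{1, …, 10}`; from `x ≥ N`, stay put. -/
noncomputable def dynkinStep (N : ℕ) (x : ℤ) : PMF ℤ :=
  if x < (N : ℤ) then (PMF.uniformOfFintype (Fin 10)).map fun r => x + (r : ℤ) + 1
  else PMF.pure x

/-- One step of the coupled Dynkin process: once both walks are past `N` nothing moves;
otherwise move both together if they agree, and otherwise move only the lagging walk. -/
noncomputable def dynkinCoupleStep (N : ℕ) (p : ℤ × ℤ) : PMF (ℤ × ℤ) :=
  if (N : ℤ) ≤ p.1 ∧ (N : ℤ) ≤ p.2 then PMF.pure p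
  else if p.1 = p.2 then
    (PMF.uniformOfFintype (Fin 10)).map fun r => (p.1 + (r : ℤ) + 1, p.2 + (r : ℤ) + 1)
  else if p.1 < p.2 then
    (PMF.uniformOfFintype (Fin 10)).map fun r => (p.1 + (r : ℤ) + 1, p.2)
  else
    (PMF.uniformOfFintype (Fin 10)).map fun r => (p.1, p.2 + (r : ℤ) + 1)


lemma iter_succ' {Ω : Type*} (f : Ω → PMF Ω) (t : ℕ) (s : Ω) :
    iter f (t + 1) s = (f s).bind (iter f t) := by
  induction t generalizing s with
  | zero => simp [iter, PMF.pure_bind, PMF.bind_pure]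
  | succ t ih =>
    show (iter f (t+1) s).bind f = _
    rw [ih, PMF.bind_bind]
    rfl

lemma iter_fixed {Ω : Type*} (f : Ω → PMF Ω) (s : Ω) (h : f s = PMF.pure s) (t : ℕ) :
    iter f t s = PMF.pure s := by
  induction t with
  | zero => rfl
  | succ t ih => show (iter f t s).bind f = _; rw [ih, PMF.pure_bind, h]

lemma pmf_meas_le_one {α : Type*} (μ : PMF α) (s : Set α) : μ.toOuterMeasure s ≤ 1 :=
  le_trans (μ.toOuterMeasure_mono (Set.inter_subset_left.trans (Set.subset_univ _)))
    (le_of_eq ((μ.toOuterMeasure_apply_eq_one_iff _).mpr (Set.subset_univ _)))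

lemma dynkinStep_of_ge {N : ℕ} {x : ℤ} (h : (N : ℤ) ≤ x) : dynkinStep N x = PMF.pure x := by
  simp [dynkinStep, not_lt.mpr h]

lemma dynkinStep_of_lt {N : ℕ} {x : ℤ} (h : x < (N : ℤ)) :
    dynkinStep N x = (PMF.uniformOfFintype (Fin 10)).map
      (fun r : Fin 10 => x + ((r : ℕ) : ℤ) + 1) := by
  simp only [dynkinStep, if_pos h]
  rw [show ((PMF.uniformOfFintype (Fin 10) : PMF (Fin 10)) : PMF ℤ)
      = PMF.map (fun a : Fin 10 => ((a : ℕ) : ℤ)) (PMF.uniformOfFintype (Fin 10)) from rfl,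
    PMF.map_comp]
  rfl

lemma iter_dynkin_stab (N : ℕ) : ∀ (t : ℕ) (x : ℤ), (N : ℤ) - x ≤ t →
    iter (dynkinStep N) (t + 1) x = iter (dynkinStep N) t x := by
  intro t
  induction t with
  | zero =>
    intro x hx
    have hx' : (N : ℤ) ≤ x := by simpa using hx
    rw [iter_succ', dynkinStep_of_ge hx', PMF.pure_bind]
  | succ t ih =>
    intro x hx
    rw [iter_succ' _ (t+1), iter_succ' _ t]
    by_cases h : (N : ℤ) ≤ x
    · rw [dynkinStep_of_ge h, PMF.pure_bind, PMF.pure_bind, ih x (by omega)]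
    · rw [dynkinStep_of_lt (by omega),
        PMF.bind_map (PMF.uniformOfFintype (Fin 10)) (fun r : Fin 10 => x + ((r : ℕ) : ℤ) + 1)
          (iter (dynkinStep N) (t+1)),
        PMF.bind_map (PMF.uniformOfFintype (Fin 10)) (fun r : Fin 10 => x + ((r : ℕ) : ℤ) + 1)
          (iter (dynkinStep N) t)]
      have hfun : (iter (dynkinStep N) (t+1) ∘ fun r : Fin 10 => x + ((r : ℕ) : ℤ) + 1)
          = (iter (dynkinStep N) t ∘ fun r : Fin 10 => x + ((r : ℕ) : ℤ) + 1) := by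
        funext r
        have hr : (0:ℤ) ≤ ((r : ℕ) : ℤ) := Int.natCast_nonneg _
        exact ih (x + ((r : ℕ) : ℤ) + 1) (by omega)
      rw [hfun]

lemma iter_dynkin_stab' (N : ℕ) (x : ℤ) {a b : ℕ} (hab : a ≤ b) (ha : (N : ℤ) - x ≤ a) :
    iter (dynkinStep N) b x = iter (dynkinStep N) a x := by
  induction b with
  | zero =>
    have h0 : a = 0 := by omega
    subst h0; rfl
  | succ b ihb =>
    rcases Nat.lt_or_ge a (b+1) with h | h
    · rw [iter_dynkin_stab N b x (by omega), ihb (by omega)]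
    · have : a = b + 1 := by omega
      subst this; rfl

lemma couple_of_abs {N : ℕ} {p : ℤ × ℤ} (h : (N : ℤ) ≤ p.1 ∧ (N : ℤ) ≤ p.2) :
    dynkinCoupleStep N p = PMF.pure p := by
  simp [dynkinCoupleStep, h]

lemma coe_uniform_eq : ((PMF.uniformOfFintype (Fin 10) : PMF (Fin 10)) : PMF ℤ)
    = PMF.map (fun a : Fin 10 => ((a : ℕ) : ℤ)) (PMF.uniformOfFintype (Fin 10)) := rfl

lemma couple_of_eq {N : ℕ} {p : ℤ × ℤ} (h : ¬((N : ℤ) ≤ p.1 ∧ (N : ℤ) ≤ p.2))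
    (he : p.1 = p.2) :
    dynkinCoupleStep N p = (PMF.uniformOfFintype (Fin 10)).map
      (fun r : Fin 10 => (p.1 + ((r : ℕ) : ℤ) + 1, p.2 + ((r : ℕ) : ℤ) + 1)) := by
  simp only [dynkinCoupleStep, if_neg h, if_pos he]
  rw [coe_uniform_eq, PMF.map_comp]
  rfl

lemma couple_of_lt {N : ℕ} {p : ℤ × ℤ} (h : ¬((N : ℤ) ≤ p.1 ∧ (N : ℤ) ≤ p.2))
    (hne : p.1 ≠ p.2) (hlt : p.1 < p.2) :
    dynkinCoupleStep N p = (PMF.uniformOfFintype (Fin 10)).map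
      (fun r : Fin 10 => (p.1 + ((r : ℕ) : ℤ) + 1, p.2)) := by
  simp only [dynkinCoupleStep, if_neg h, if_neg hne, if_pos hlt]
  rw [coe_uniform_eq, PMF.map_comp]
  rfl

lemma couple_of_gt {N : ℕ} {p : ℤ × ℤ} (h : ¬((N : ℤ) ≤ p.1 ∧ (N : ℤ) ≤ p.2))
    (hne : p.1 ≠ p.2) (hgt : p.2 < p.1) :
    dynkinCoupleStep N p = (PMF.uniformOfFintype (Fin 10)).map
      (fun r : Fin 10 => (p.1, p.2 + ((r : ℕ) : ℤ) + 1)) := by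
  simp only [dynkinCoupleStep, if_neg h, if_neg hne, if_neg (not_lt.mpr hgt.le)]
  rw [coe_uniform_eq, PMF.map_comp]
  rfl

lemma iter_couple_abs {N : ℕ} {x₁ x₂ : ℤ} (h₁ : (N : ℤ) ≤ x₁) (h₂ : (N : ℤ) ≤ x₂) (t : ℕ) :
    iter (dynkinCoupleStep N) t (x₁, x₂) = PMF.pure (x₁, x₂) :=
  iter_fixed _ _ (couple_of_abs ⟨h₁, h₂⟩) t


lemma marg_fst (N : ℕ) : ∀ (t : ℕ) (x₁ x₂ : ℤ),
    ((N : ℤ) - x₁).toNat + ((N : ℤ) - x₂).toNat ≤ t →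
    (iter (dynkinCoupleStep N) t (x₁, x₂)).map Prod.fst = iter (dynkinStep N) t x₁ := by
  intro t
  induction t with
  | zero => intro x₁ x₂ _; simp [iter, PMF.pure_map]
  | succ t ih =>
    intro x₁ x₂ hc
    rw [iter_succ' (dynkinCoupleStep N) t (x₁, x₂)]
    by_cases habs : (N : ℤ) ≤ x₁ ∧ (N : ℤ) ≤ x₂
    · rw [couple_of_abs habs, PMF.pure_bind, iter_couple_abs habs.1 habs.2, PMF.pure_map,
        iter_fixed _ _ (dynkinStep_of_ge habs.1)]
    · rcases lt_trichotomy x₁ x₂ with hlt | heq | hgt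
      · have h1 : x₁ < (N : ℤ) := by rcases not_and_or.mp habs with h | h <;> omega
        rw [couple_of_lt habs hlt.ne hlt,
          PMF.bind_map (PMF.uniformOfFintype (Fin 10))
            (fun r : Fin 10 => (x₁ + ((r : ℕ) : ℤ) + 1, x₂)) (iter (dynkinCoupleStep N) t),
          PMF.map_bind, iter_succ' (dynkinStep N) t x₁, dynkinStep_of_lt h1,
          PMF.bind_map (PMF.uniformOfFintype (Fin 10))
            (fun r : Fin 10 => x₁ + ((r : ℕ) : ℤ) + 1) (iter (dynkinStep N) t)]
        refine congrArg _ (funext fun r => ?_)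
        have hr : (0:ℤ) ≤ ((r : ℕ) : ℤ) := Int.natCast_nonneg _
        exact ih (x₁ + ((r : ℕ) : ℤ) + 1) x₂ (by omega)
      · subst heq
        have h1 : x₁ < (N : ℤ) := by rcases not_and_or.mp habs with h | h <;> omega
        rw [couple_of_eq habs rfl,
          PMF.bind_map (PMF.uniformOfFintype (Fin 10))
            (fun r : Fin 10 => (x₁ + ((r : ℕ) : ℤ) + 1, x₁ + ((r : ℕ) : ℤ) + 1))
            (iter (dynkinCoupleStep N) t),
          PMF.map_bind, iter_succ' (dynkinStep N) t x₁, dynkinStep_of_lt h1,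
          PMF.bind_map (PMF.uniformOfFintype (Fin 10))
            (fun r : Fin 10 => x₁ + ((r : ℕ) : ℤ) + 1) (iter (dynkinStep N) t)]
        refine congrArg _ (funext fun r => ?_)
        have hr : (0:ℤ) ≤ ((r : ℕ) : ℤ) := Int.natCast_nonneg _
        exact ih (x₁ + ((r : ℕ) : ℤ) + 1) (x₁ + ((r : ℕ) : ℤ) + 1) (by omega)
      · have h2 : x₂ < (N : ℤ) := by rcases not_and_or.mp habs with h | h <;> omega
        rw [couple_of_gt habs hgt.ne' hgt,
          PMF.bind_map (PMF.uniformOfFintype (Fin 10))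
            (fun r : Fin 10 => (x₁, x₂ + ((r : ℕ) : ℤ) + 1)) (iter (dynkinCoupleStep N) t),
          PMF.map_bind]
        have hb : (fun r : Fin 10 =>
            ((iter (dynkinCoupleStep N) t ∘ fun r : Fin 10 => (x₁, x₂ + ((r : ℕ) : ℤ) + 1)) r).map
              Prod.fst) = fun _ => iter (dynkinStep N) t x₁ := by
          funext r
          have hr : (0:ℤ) ≤ ((r : ℕ) : ℤ) := Int.natCast_nonneg _
          exact ih x₁ (x₂ + ((r : ℕ) : ℤ) + 1) (by omega)
        rw [hb, PMF.bind_const, iter_succ' (dynkinStep N) t x₁,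
          ← iter_succ' (dynkinStep N) t x₁, iter_dynkin_stab N t x₁ (by omega)]

lemma marg_snd (N : ℕ) : ∀ (t : ℕ) (x₁ x₂ : ℤ),
    ((N : ℤ) - x₁).toNat + ((N : ℤ) - x₂).toNat ≤ t →
    (iter (dynkinCoupleStep N) t (x₁, x₂)).map Prod.snd = iter (dynkinStep N) t x₂ := by
  intro t
  induction t with
  | zero => intro x₁ x₂ _; simp [iter, PMF.pure_map]
  | succ t ih =>
    intro x₁ x₂ hc
    rw [iter_succ' (dynkinCoupleStep N) t (x₁, x₂)]
    by_cases habs : (N : ℤ) ≤ x₁ ∧ (N : ℤ) ≤ x₂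
    · rw [couple_of_abs habs, PMF.pure_bind, iter_couple_abs habs.1 habs.2, PMF.pure_map,
        iter_fixed _ _ (dynkinStep_of_ge habs.2)]
    · rcases lt_trichotomy x₁ x₂ with hlt | heq | hgt
      · have h1 : x₁ < (N : ℤ) := by rcases not_and_or.mp habs with h | h <;> omega
        rw [couple_of_lt habs hlt.ne hlt,
          PMF.bind_map (PMF.uniformOfFintype (Fin 10))
            (fun r : Fin 10 => (x₁ + ((r : ℕ) : ℤ) + 1, x₂)) (iter (dynkinCoupleStep N) t),
          PMF.map_bind]
        have hb : (fun r : Fin 10 =>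
            ((iter (dynkinCoupleStep N) t ∘ fun r : Fin 10 => (x₁ + ((r : ℕ) : ℤ) + 1, x₂)) r).map
              Prod.snd) = fun _ => iter (dynkinStep N) t x₂ := by
          funext r
          have hr : (0:ℤ) ≤ ((r : ℕ) : ℤ) := Int.natCast_nonneg _
          exact ih (x₁ + ((r : ℕ) : ℤ) + 1) x₂ (by omega)
        rw [hb, PMF.bind_const, iter_succ' (dynkinStep N) t x₂,
          ← iter_succ' (dynkinStep N) t x₂, iter_dynkin_stab N t x₂ (by omega)]
      · subst heq
        have h1 : x₁ < (N : ℤ) := by rcases not_and_or.mp habs with h | h <;> omega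
        rw [couple_of_eq habs rfl,
          PMF.bind_map (PMF.uniformOfFintype (Fin 10))
            (fun r : Fin 10 => (x₁ + ((r : ℕ) : ℤ) + 1, x₁ + ((r : ℕ) : ℤ) + 1))
            (iter (dynkinCoupleStep N) t),
          PMF.map_bind, iter_succ' (dynkinStep N) t x₁, dynkinStep_of_lt h1,
          PMF.bind_map (PMF.uniformOfFintype (Fin 10))
            (fun r : Fin 10 => x₁ + ((r : ℕ) : ℤ) + 1) (iter (dynkinStep N) t)]
        refine congrArg _ (funext fun r => ?_)
        have hr : (0:ℤ) ≤ ((r : ℕ) : ℤ) := Int.natCast_nonneg _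
        exact ih (x₁ + ((r : ℕ) : ℤ) + 1) (x₁ + ((r : ℕ) : ℤ) + 1) (by omega)
      · have h2 : x₂ < (N : ℤ) := by rcases not_and_or.mp habs with h | h <;> omega
        rw [couple_of_gt habs hgt.ne' hgt,
          PMF.bind_map (PMF.uniformOfFintype (Fin 10))
            (fun r : Fin 10 => (x₁, x₂ + ((r : ℕ) : ℤ) + 1)) (iter (dynkinCoupleStep N) t),
          PMF.map_bind, iter_succ' (dynkinStep N) t x₂, dynkinStep_of_lt h2,
          PMF.bind_map (PMF.uniformOfFintype (Fin 10))
            (fun r : Fin 10 => x₂ + ((r : ℕ) : ℤ) + 1) (iter (dynkinStep N) t)]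
        refine congrArg _ (funext fun r => ?_)
        have hr : (0:ℤ) ≤ ((r : ℕ) : ℤ) := Int.natCast_nonneg _
        exact ih x₁ (x₂ + ((r : ℕ) : ℤ) + 1) (by omega)

lemma eq_stays (N : ℕ) : ∀ (t : ℕ) (x : ℤ),
    (iter (dynkinCoupleStep N) t (x, x)).toOuterMeasure {p : ℤ × ℤ | p.1 ≠ p.2} = 0 := by
  intro t
  induction t with
  | zero =>
    intro x
    show (PMF.pure (x, x)).toOuterMeasure _ = 0
    rw [PMF.toOuterMeasure_pure_apply, if_neg (by simp)]
  | succ t ih =>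
    intro x
    rw [iter_succ' (dynkinCoupleStep N) t (x, x)]
    by_cases habs : (N : ℤ) ≤ x
    · rw [couple_of_abs ⟨habs, habs⟩, PMF.pure_bind, ih]
    · rw [couple_of_eq (by simp [habs]) rfl,
        PMF.bind_map (PMF.uniformOfFintype (Fin 10))
          (fun r : Fin 10 => (x + ((r : ℕ) : ℤ) + 1, x + ((r : ℕ) : ℤ) + 1))
          (iter (dynkinCoupleStep N) t),
        PMF.toOuterMeasure_bind_apply]
      refine ENNReal.tsum_eq_zero.mpr fun r => ?_
      show _ * (iter (dynkinCoupleStep N) t (x + ((r : ℕ) : ℤ) + 1, x + ((r : ℕ) : ℤ) + 1)).toOuterMeasure _ = 0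
      rw [ih, mul_zero]

/-- Minimal number of moves for coordinate `x` to reach `N` (jumps of size ≤ 10). -/
def ccost (N : ℕ) (x : ℤ) : ℕ := (((N : ℤ) - x).toNat + 9) / 10

lemma keybound (N : ℕ) : ∀ (t : ℕ) (x₁ x₂ : ℤ),
    (x₁ ≠ x₂ → x₁ - x₂ ≤ 10 ∧ x₂ - x₁ ≤ 10) →
    (iter (dynkinCoupleStep N) t (x₁, x₂)).toOuterMeasure {p : ℤ × ℤ | p.1 ≠ p.2}
      ≤ (9 / 10 : ℝ≥0∞) ^ min t (ccost N x₁ + ccost N x₂) := by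
  intro t
  induction t with
  | zero =>
    intro x₁ x₂ _
    simpa using pmf_meas_le_one _ _
  | succ t ih =>
    intro x₁ x₂ hinv
    by_cases heq : x₁ = x₂
    · rw [heq, eq_stays N (t + 1) x₂]; exact zero_le
    by_cases hM : min (t + 1) (ccost N x₁ + ccost N x₂) = 0
    · rw [hM, pow_zero]; exact pmf_meas_le_one _ _
    have hcc : 1 ≤ ccost N x₁ + ccost N x₂ := by omega
    have habs : ¬((N : ℤ) ≤ x₁ ∧ (N : ℤ) ≤ x₂) := by
      rintro ⟨h1, h2⟩
      have c1 : ccost N x₁ = 0 := by unfold ccost; omega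
      have c2 : ccost N x₂ = 0 := by unfold ccost; omega
      omega
    set M := min (t + 1) (ccost N x₁ + ccost N x₂) with hMdef
    have hM1 : 1 ≤ M := by omega
    have hMsucc : M - 1 + 1 = M := by omega
    rcases lt_or_gt_of_ne heq with hlt | hgt
    · -- x₁ < x₂, the first coordinate moves
      have h1 : x₁ < (N : ℤ) := by rcases not_and_or.mp habs with h | h <;> omega
      have hd10 : x₂ - x₁ ≤ 10 := (hinv heq).2
      rw [iter_succ' (dynkinCoupleStep N) t (x₁, x₂), couple_of_lt habs heq hlt,
        PMF.bind_map (PMF.uniformOfFintype (Fin 10))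
          (fun r : Fin 10 => (x₁ + ((r : ℕ) : ℤ) + 1, x₂)) (iter (dynkinCoupleStep N) t),
        PMF.toOuterMeasure_bind_apply, tsum_fintype]
      set r₀ : Fin 10 := ⟨(x₂ - x₁ - 1).toNat, by omega⟩ with hr₀
      rw [← Finset.sum_erase_add _ _ (Finset.mem_univ r₀)]
      have hzero : PMF.uniformOfFintype (Fin 10) r₀ *
          ((iter (dynkinCoupleStep N) t ∘ fun r : Fin 10 => (x₁ + ((r : ℕ) : ℤ) + 1, x₂)) r₀).toOuterMeasure
            {p : ℤ × ℤ | p.1 ≠ p.2} = 0 := by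
        have hx : x₁ + ((r₀ : ℕ) : ℤ) + 1 = x₂ := by
          show x₁ + (((x₂ - x₁ - 1).toNat : ℕ) : ℤ) + 1 = x₂
          omega
        show PMF.uniformOfFintype (Fin 10) r₀ *
          (iter (dynkinCoupleStep N) t (x₁ + ((r₀ : ℕ) : ℤ) + 1, x₂)).toOuterMeasure _ = 0
        rw [hx, eq_stays, mul_zero]
      rw [hzero, add_zero]
      refine le_trans (Finset.sum_le_card_nsmul _ _ ((10 : ℝ≥0∞)⁻¹ * (9 / 10) ^ (M - 1)) ?_) ?_
      · intro r hr
        have hrne : r ≠ r₀ := Finset.ne_of_mem_erase hr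
        have hrval : (r : ℕ) ≠ (x₂ - x₁ - 1).toNat := fun h => hrne (Fin.ext h)
        have hrlt : (r : ℕ) < 10 := r.isLt
        set y : ℤ := x₁ + ((r : ℕ) : ℤ) + 1 with hy
        have hcy : ccost N x₁ - 1 ≤ ccost N y ∧ ccost N y ≤ ccost N x₁ := by
          constructor <;> (unfold ccost; omega)
        have hinner : (iter (dynkinCoupleStep N) t (y, x₂)).toOuterMeasure
            {p : ℤ × ℤ | p.1 ≠ p.2} ≤ (9 / 10 : ℝ≥0∞) ^ (M - 1) := by
          refine le_trans (ih y x₂ fun _ => ⟨by omega, by omega⟩) ?_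
          refine pow_le_pow_of_le_one zero_le
            (by rw [ENNReal.div_le_iff (by norm_num) (by norm_num)]; norm_num) ?_
          omega
        have huni : PMF.uniformOfFintype (Fin 10) r = (10 : ℝ≥0∞)⁻¹ := by
          simp [PMF.uniformOfFintype_apply]
        show PMF.uniformOfFintype (Fin 10) r *
            (iter (dynkinCoupleStep N) t (y, x₂)).toOuterMeasure _ ≤ _
        rw [huni]
        exact mul_le_mul_right hinner _
      · have hcard : ((Finset.univ : Finset (Fin 10)).erase r₀).card = 9 := by simp
        rw [hcard, nsmul_eq_mul]
        refine le_of_eq ?_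
        calc ((9 : ℕ) : ℝ≥0∞) * ((10 : ℝ≥0∞)⁻¹ * (9 / 10) ^ (M - 1))
            = (9 / 10) * (9 / 10) ^ (M - 1) := by
              rw [ENNReal.div_eq_inv_mul]; norm_num; ring
          _ = (9 / 10) ^ M := by rw [← pow_succ', hMsucc]
    · -- x₂ < x₁, the second coordinate moves
      have h2 : x₂ < (N : ℤ) := by rcases not_and_or.mp habs with h | h <;> omega
      have hd10 : x₁ - x₂ ≤ 10 := (hinv heq).1
      rw [iter_succ' (dynkinCoupleStep N) t (x₁, x₂), couple_of_gt habs heq hgt,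
        PMF.bind_map (PMF.uniformOfFintype (Fin 10))
          (fun r : Fin 10 => (x₁, x₂ + ((r : ℕ) : ℤ) + 1)) (iter (dynkinCoupleStep N) t),
        PMF.toOuterMeasure_bind_apply, tsum_fintype]
      set r₀ : Fin 10 := ⟨(x₁ - x₂ - 1).toNat, by omega⟩ with hr₀
      rw [← Finset.sum_erase_add _ _ (Finset.mem_univ r₀)]
      have hzero : PMF.uniformOfFintype (Fin 10) r₀ *
          ((iter (dynkinCoupleStep N) t ∘ fun r : Fin 10 => (x₁, x₂ + ((r : ℕ) : ℤ) + 1)) r₀).toOuterMeasure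
            {p : ℤ × ℤ | p.1 ≠ p.2} = 0 := by
        have hx : x₂ + ((r₀ : ℕ) : ℤ) + 1 = x₁ := by
          show x₂ + (((x₁ - x₂ - 1).toNat : ℕ) : ℤ) + 1 = x₁
          omega
        show PMF.uniformOfFintype (Fin 10) r₀ *
          (iter (dynkinCoupleStep N) t (x₁, x₂ + ((r₀ : ℕ) : ℤ) + 1)).toOuterMeasure _ = 0
        rw [hx, eq_stays, mul_zero]
      rw [hzero, add_zero]
      refine le_trans (Finset.sum_le_card_nsmul _ _ ((10 : ℝ≥0∞)⁻¹ * (9 / 10) ^ (M - 1)) ?_) ?_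
      · intro r hr
        have hrne : r ≠ r₀ := Finset.ne_of_mem_erase hr
        have hrval : (r : ℕ) ≠ (x₁ - x₂ - 1).toNat := fun h => hrne (Fin.ext h)
        have hrlt : (r : ℕ) < 10 := r.isLt
        set y : ℤ := x₂ + ((r : ℕ) : ℤ) + 1 with hy
        have hcy : ccost N x₂ - 1 ≤ ccost N y ∧ ccost N y ≤ ccost N x₂ := by
          constructor <;> (unfold ccost; omega)
        have hinner : (iter (dynkinCoupleStep N) t (x₁, y)).toOuterMeasure
            {p : ℤ × ℤ | p.1 ≠ p.2} ≤ (9 / 10 : ℝ≥0∞) ^ (M - 1) := by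
          refine le_trans (ih x₁ y fun _ => ⟨by omega, by omega⟩) ?_
          refine pow_le_pow_of_le_one zero_le
            (by rw [ENNReal.div_le_iff (by norm_num) (by norm_num)]; norm_num) ?_
          omega
        have huni : PMF.uniformOfFintype (Fin 10) r = (10 : ℝ≥0∞)⁻¹ := by
          simp [PMF.uniformOfFintype_apply]
        show PMF.uniformOfFintype (Fin 10) r *
            (iter (dynkinCoupleStep N) t (x₁, y)).toOuterMeasure _ ≤ _
        rw [huni]
        exact mul_le_mul_right hinner _
      · have hcard : ((Finset.univ : Finset (Fin 10)).erase r₀).card = 9 := by simp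
        rw [hcard, nsmul_eq_mul]
        refine le_of_eq ?_
        calc ((9 : ℕ) : ℝ≥0∞) * ((10 : ℝ≥0∞)⁻¹ * (9 / 10) ^ (M - 1))
            = (9 / 10) * (9 / 10) ^ (M - 1) := by
              rw [ENNReal.div_eq_inv_mul]; norm_num; ring
          _ = (9 / 10) ^ M := by rw [← pow_succ', hMsucc]

/-- The coupled Dynkin process run for `2N` steps is a coupling of the two Dynkin processes
run for `N` steps, and it witnesses the convergence bound `(9/10) ^ (N/5 - 2)`. -/
theorem dynkin_coupling (N : ℕ) (hN : 10 < N) (s₁ s₂ : ℤ)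
    (hs₁ : 1 ≤ s₁ ∧ s₁ ≤ 10) (hs₂ : 1 ≤ s₂ ∧ s₂ ≤ 10) :
    IsCoupling (iter (dynkinCoupleStep N) (2 * N) (s₁, s₂))
        (iter (dynkinStep N) N s₁) (iter (dynkinStep N) N s₂) ∧
      (iter (dynkinCoupleStep N) (2 * N) (s₁, s₂)).pr {p | p.1 ≠ p.2} ≤
        (9 / 10 : ℝ) ^ ((N : ℝ) / 5 - 2) := by
  obtain ⟨hs₁1, hs₁10⟩ := hs₁
  obtain ⟨hs₂1, hs₂10⟩ := hs₂
  refine ⟨⟨?_, ?_⟩, ?_⟩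
  · rw [marg_fst N (2 * N) s₁ s₂ (by omega)]
    exact iter_dynkin_stab' N s₁ (by omega) (by omega)
  · rw [marg_snd N (2 * N) s₁ s₂ (by omega)]
    exact iter_dynkin_stab' N s₂ (by omega) (by omega)
  · have hb := keybound N (2 * N) s₁ s₂ (fun _ => ⟨by omega, by omega⟩)
    have hc₁ : ccost N s₁ ≤ N := by unfold ccost; omega
    have hc₂ : ccost N s₂ ≤ N := by unfold ccost; omega
    have hmin : min (2 * N) (ccost N s₁ + ccost N s₂) = ccost N s₁ + ccost N s₂ := by omega
    rw [hmin] at hb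
    set k := ccost N s₁ + ccost N s₂ with hk
    have hne : (9 / 10 : ℝ≥0∞) ^ k ≠ ⊤ := ENNReal.pow_ne_top (by simp [ENNReal.div_eq_top])
    have h1 : ((iter (dynkinCoupleStep N) (2 * N) (s₁, s₂)).toOuterMeasure
        {p : ℤ × ℤ | p.1 ≠ p.2}).toReal ≤ ((9 / 10 : ℝ≥0∞) ^ k).toReal :=
      ENNReal.toReal_mono hne hb
    have h2 : ((9 / 10 : ℝ≥0∞) ^ k).toReal = (9 / 10 : ℝ) ^ k := by
      rw [ENNReal.toReal_pow, ENNReal.toReal_div]; norm_num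
    have h10 : 2 * N ≤ 10 * k + 20 := by
      have e1 : ((N : ℤ) - s₁).toNat ≤ 10 * ccost N s₁ := by unfold ccost; omega
      have e2 : ((N : ℤ) - s₂).toNat ≤ 10 * ccost N s₂ := by unfold ccost; omega
      omega
    have hexp : (N : ℝ) / 5 - 2 ≤ (k : ℝ) := by
      have : (2 * N : ℝ) ≤ 10 * (k : ℝ) + 20 := by exact_mod_cast h10
      linarith
    have h3 : (9 / 10 : ℝ) ^ k ≤ (9 / 10 : ℝ) ^ ((N : ℝ) / 5 - 2) := by
      rw [← Real.rpow_natCast (9 / 10 : ℝ) k]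
      exact Real.rpow_le_rpow_of_exponent_ge (by norm_num) (by norm_num) hexp
    exact h1.trans (h2 ▸ h3)
end

section
/- Adjacent coupling for the Glauber dynamics: assume k ≥ D and let w₁, w₂ be valid colorings that differ at exactly one vertex (Hamming distance 1). Then there exists a coupling μ of glauberStep(w₁) and glauberStep(w₂) whose support is contained in pairs of colorings at Hamming distance at most 2, and such that E_{(w₁',w₂')∼μ}[d(w₁', w₂')] ≤ 1 - 1/n + 2D/(k·n). -/
open scoped ENNReal

/-- A coloring is valid (proper) if adjacent vertices get distinct colors. -/
def validCol {V C : Type*} (G : SimpleGraph V) (w : V → C) : Prop :=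
  ∀ u v, G.Adj u v → w u ≠ w v

instance {V C : Type*} [Fintype V] [DecidableEq C] (G : SimpleGraph V)
    [DecidableRel G.Adj] (w : V → C) : Decidable (validCol G w) :=
  inferInstanceAs (Decidable (∀ u v, G.Adj u v → w u ≠ w v))

/-- The Hamming distance between two colorings: the number of vertices where they differ. -/
def hamm {V C : Type*} [Fintype V] [DecidableEq C] (w₁ w₂ : V → C) : ℕ :=
  (Finset.univ.filter fun v => w₁ v ≠ w₂ v).card

/-- One step of the Glauber dynamics: resample a uniformly random vertex with a uniformly
random color, keeping the change only if the result is a valid coloring. -/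
noncomputable def glauberStep {V C : Type*} [Fintype V] [Nonempty V] [DecidableEq V]
    [Fintype C] [Nonempty C] [DecidableEq C]
    (G : SimpleGraph V) [DecidableRel G.Adj] (w : V → C) : PMF (V → C) :=
  (PMF.uniformOfFintype V).bind fun v =>
    (PMF.uniformOfFintype C).bind fun c =>
      PMF.pure (if validCol G (Function.update w v c) then Function.update w v c else w)


open Finset in
lemma tsum_bind_mul {α β : Type*} (p : PMF α) (f : α → PMF β) (g : β → ℝ≥0∞) :
    ∑' b, p.bind f b * g b = ∑' a, p a * ∑' b, f a b * g b := by
  simp only [PMF.bind_apply]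
  have : ∀ b, (∑' a, p a * f a b) * g b = ∑' a, p a * f a b * g b := by
    intro b; rw [ENNReal.tsum_mul_right]
  simp only [this]
  rw [ENNReal.tsum_comm]
  congr 1; ext a
  rw [← ENNReal.tsum_mul_left]
  congr 1; ext b; ring

lemma tsum_pure_mul {β : Type*} (x : β) (g : β → ℝ≥0∞) :
    ∑' b, PMF.pure x b * g b = g x := by
  rw [tsum_eq_single x]
  · simp
  · intro b hb; simp [PMF.pure_apply, hb]

lemma bind_equiv_eq {C : Type*} [Fintype C] [Nonempty C] {β : Type*} (e : C ≃ C)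
    (g : C → PMF β) :
    ((PMF.uniformOfFintype C).bind fun c => g (e c)) = (PMF.uniformOfFintype C).bind g := by
  ext x
  simp only [PMF.bind_apply, PMF.uniformOfFintype_apply]
  exact e.tsum_eq fun c => ((Fintype.card C : ℝ≥0∞))⁻¹ * g c x

lemma validCol_update_iff {V C : Type*} (G : SimpleGraph V) [DecidableEq V] {w : V → C}
    (hw : validCol G w) (v : V) (c : C) :
    validCol G (Function.update w v c) ↔ ∀ u, G.Adj v u → w u ≠ c := by
  constructor
  · intro h u hu
    have := h v u hu
    rw [Function.update_self, Function.update_of_ne (G.ne_of_adj hu).symm] at this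
    exact fun hc => this hc.symm
  · intro h u u' ha
    rcases eq_or_ne u v with rfl | hu
    · rw [Function.update_self, Function.update_of_ne (G.ne_of_adj ha).symm]
      exact fun hc => h u' ha hc.symm
    · rw [Function.update_of_ne hu]
      rcases eq_or_ne u' v with rfl | hu'
      · rw [Function.update_self]
        exact h u ha.symm
      · rw [Function.update_of_ne hu']
        exact hw u u' ha

lemma final_arith (n k D : ℕ) (hn : 0 < n) (hk : 0 < k) :
    (n : ℝ≥0∞)⁻¹ * ((k : ℝ≥0∞)⁻¹ * (((n-1)*k + 2*D : ℕ) : ℝ≥0∞)) ≤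
      ENNReal.ofReal (1 - 1/(n:ℝ) + 2*D/((k:ℝ)*(n:ℝ))) := by
  have hn' : (0:ℝ) < n := by exact_mod_cast hn
  have hk' : (0:ℝ) < k := by exact_mod_cast hk
  have hr : 1 - 1/(n:ℝ) + 2*D/((k:ℝ)*n) = ((((n-1)*k + 2*D : ℕ)):ℝ)/((n:ℝ)*k) := by
    have hX : (((n-1)*k + 2*D : ℕ) : ℝ) = ((n:ℝ)-1)*k + 2*D := by
      push_cast [Nat.cast_sub hn]
      ring
    rw [hX]; field_simp
  rw [hr, ENNReal.ofReal_div_of_pos (by positivity), ENNReal.ofReal_natCast]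
  have hmul : ENNReal.ofReal ((n:ℝ)*k) = (n:ℝ≥0∞) * k := by
    rw [ENNReal.ofReal_mul hn'.le]
    simp
  rw [hmul, div_eq_mul_inv,
    ENNReal.mul_inv (Or.inl (by simp [hn.ne'])) (Or.inl (by simp))]
  exact le_of_eq (by ring)

/-- Adjacent coupling for the Glauber dynamics: two valid colorings at Hamming distance `1`
can be coupled so that the distance stays at most `2` and the expected distance is at most
`1 - 1/n + 2D/(kn)`. -/
theorem glauber_adjacent_coupling {V C : Type*} [Fintype V] [Nonempty V] [DecidableEq V]
    [Fintype C] [Nonempty C] [DecidableEq C]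
    (G : SimpleGraph V) [DecidableRel G.Adj] (D : ℕ)
    (hdeg : ∀ v, G.degree v ≤ D) (hkD : D ≤ Fintype.card C)
    (w₁ w₂ : V → C) (h₁ : validCol G w₁) (h₂ : validCol G w₂) (hadj : hamm w₁ w₂ = 1) :
    ∃ μ : PMF ((V → C) × (V → C)),
      IsCoupling μ (glauberStep G w₁) (glauberStep G w₂) ∧
      (∀ p ∈ μ.support, hamm p.1 p.2 ≤ 2) ∧
      ∑' p : (V → C) × (V → C), μ p * (hamm p.1 p.2 : ℝ≥0∞) ≤
        ENNReal.ofReal (1 - 1 / (Fintype.card V : ℝ) +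
          2 * D / ((Fintype.card C : ℝ) * (Fintype.card V : ℝ))) := by
  classical
  obtain ⟨v₀, hv₀⟩ := Finset.card_eq_one.mp hadj
  have hmem : ∀ u, w₁ u ≠ w₂ u ↔ u = v₀ := by
    intro u
    rw [← Finset.mem_singleton, ← hv₀, Finset.mem_filter]
    simp
  have hne : w₁ v₀ ≠ w₂ v₀ := (hmem v₀).mpr rfl
  have heq : ∀ u, u ≠ v₀ → w₁ u = w₂ u := fun u hu => by
    by_contra h; exact hu ((hmem u).mp h)
  set a := w₁ v₀ with haa
  set b := w₂ v₀ with hbb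
  set e : V → C ≃ C := fun v => if G.Adj v v₀ then Equiv.swap a b else Equiv.refl C with he
  set F : (V → C) → V → C → (V → C) := fun w v c =>
    if validCol G (Function.update w v c) then Function.update w v c else w with hF
  have hFne : ∀ (w : V → C) v c u, u ≠ v → F w v c u = w u := by
    intro w v c u hu
    simp only [hF]
    split <;> simp [Function.update_of_ne hu]
  set μ : PMF ((V → C) × (V → C)) := (PMF.uniformOfFintype V).bind fun v =>
    (PMF.uniformOfFintype C).bind fun c => PMF.pure (F w₁ v c, F w₂ v (e v c)) with hμ
  -- generic distance facts
  have hdist : ∀ v c c', (Finset.univ.filter fun u => F w₁ v c u ≠ F w₂ v c' u) ⊆ {v, v₀} := by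
    intro v c c' u hu
    simp only [Finset.mem_filter, Finset.mem_univ, true_and] at hu
    by_contra hu'
    simp only [Finset.mem_insert, Finset.mem_singleton, not_or] at hu'
    exact hu (by rw [hFne w₁ v c u hu'.1, hFne w₂ v c' u hu'.1, heq u hu'.2])
  have h2 : ∀ v c c', hamm (F w₁ v c) (F w₂ v c') ≤ 2 := by
    intro v c c'
    refine le_trans (Finset.card_le_card (hdist v c c')) ?_
    refine le_trans (Finset.card_insert_le _ _) ?_
    simp
  refine ⟨μ, ⟨?_, ?_⟩, ?_, ?_⟩
  · -- first marginal
    show μ.map Prod.fst = glauberStep G w₁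
    rw [hμ, glauberStep]
    simp only [PMF.map_bind, PMF.pure_map]
    rfl
  · -- second marginal
    show μ.map Prod.snd = glauberStep G w₂
    rw [hμ, glauberStep]
    simp only [PMF.map_bind, PMF.pure_map]
    refine congrArg _ (funext fun v => ?_)
    exact bind_equiv_eq (e v) fun c => PMF.pure (F w₂ v c)
  · -- support
    intro p hp
    rw [hμ] at hp
    simp only [PMF.support_bind, PMF.support_pure, Set.mem_iUnion] at hp
    obtain ⟨v, -, c, -, hpc⟩ := hp
    simp only [Set.mem_singleton_iff] at hpc
    subst hpc
    exact h2 v c (e v c)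
  · -- expectation bound
    have hiff : ∀ v c, (∀ u, G.Adj v u → (w₁ u ≠ c ↔ w₂ u ≠ c)) →
        (validCol G (Function.update w₁ v c) ↔ validCol G (Function.update w₂ v c)) := by
      intro v c h
      rw [validCol_update_iff G h₁, validCol_update_iff G h₂]
      exact forall_congr' fun u => imp_congr_right fun hu => h u hu
    have hH1 : ∀ v c, v ≠ v₀ →
        (validCol G (Function.update w₁ v c) ↔ validCol G (Function.update w₂ v c)) →
        hamm (F w₁ v c) (F w₂ v c) ≤ 1 := by
      intro v c hv hval
      by_cases h : validCol G (Function.update w₁ v c)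
      · have h' := hval.mp h
        have hF1 : F w₁ v c = Function.update w₁ v c := if_pos h
        have hF2 : F w₂ v c = Function.update w₂ v c := if_pos h'
        have hsub : (Finset.univ.filter fun u => F w₁ v c u ≠ F w₂ v c u) ⊆ {v₀} := by
          intro u hu
          simp only [Finset.mem_filter, Finset.mem_univ, true_and] at hu
          rw [Finset.mem_singleton]
          by_contra hu'
          rcases eq_or_ne u v with rfl | huv
          · rw [hF1, hF2] at hu; simp at hu
          · rw [hF1, hF2, Function.update_of_ne huv, Function.update_of_ne huv] at hu
            exact hu (heq u hu')
        exact le_trans (Finset.card_le_card hsub) (by simp)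
      · have h' := (not_iff_not.mpr hval).mp h
        have hF1 : F w₁ v c = w₁ := if_neg h
        have hF2 : F w₂ v c = w₂ := if_neg h'
        rw [hF1, hF2]
        exact hadj.le
    have hSv₀ : ∑ c, hamm (F w₁ v₀ c) (F w₂ v₀ (e v₀ c)) ≤ D := by
      have he0 : e v₀ = Equiv.refl C := if_neg G.irrefl
      have key : ∀ c, hamm (F w₁ v₀ c) (F w₂ v₀ (e v₀ c)) ≤
          if c ∈ (G.neighborFinset v₀).image w₁ then 1 else 0 := by
        intro c
        rw [he0]; simp only [Equiv.refl_apply]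
        by_cases hc : c ∈ (G.neighborFinset v₀).image w₁
        · rw [if_pos hc]
          have hsub : (Finset.univ.filter fun u => F w₁ v₀ c u ≠ F w₂ v₀ c u) ⊆ {v₀} := by
            intro u hu
            have := hdist v₀ c c hu
            simpa using this
          exact le_trans (Finset.card_le_card hsub) (by simp)
        · rw [if_neg hc]
          have hval1 : validCol G (Function.update w₁ v₀ c) := by
            rw [validCol_update_iff G h₁]
            intro u hu hc'
            exact hc (Finset.mem_image.mpr ⟨u, (SimpleGraph.mem_neighborFinset _ _ _).mpr hu, hc'⟩)
          have hval2 : validCol G (Function.update w₂ v₀ c) := by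
            rw [validCol_update_iff G h₂]
            intro u hu hc'
            have hu' : u ≠ v₀ := fun h => G.irrefl (h ▸ hu)
            exact hc (Finset.mem_image.mpr ⟨u, (SimpleGraph.mem_neighborFinset _ _ _).mpr hu,
              (heq u hu') ▸ hc'⟩)
          have hupd : Function.update w₁ v₀ c = Function.update w₂ v₀ c := by
            funext u
            rcases eq_or_ne u v₀ with rfl | hu
            · simp
            · rw [Function.update_of_ne hu, Function.update_of_ne hu]; exact heq u hu
          have hF1 : F w₁ v₀ c = Function.update w₁ v₀ c := if_pos hval1
          have hF2 : F w₂ v₀ c = Function.update w₂ v₀ c := if_pos hval2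
          rw [hF1, hF2, hupd]
          simp [hamm]
      calc ∑ c, hamm (F w₁ v₀ c) (F w₂ v₀ (e v₀ c))
          ≤ ∑ c, (if c ∈ (G.neighborFinset v₀).image w₁ then 1 else 0) :=
            Finset.sum_le_sum fun c _ => key c
        _ = ((G.neighborFinset v₀).image w₁).card := by
            rw [Finset.sum_ite_mem, Finset.univ_inter, Finset.sum_const, smul_eq_mul, mul_one]
        _ ≤ (G.neighborFinset v₀).card := Finset.card_image_le
        _ = G.degree v₀ := G.card_neighborFinset_eq_degree v₀
        _ ≤ D := hdeg v₀
    have hSv : ∀ v, v ≠ v₀ → ∑ c, hamm (F w₁ v c) (F w₂ v (e v c)) ≤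
        Fintype.card C + if G.Adj v v₀ then 1 else 0 := by
      intro v hv
      by_cases hav : G.Adj v v₀
      · have hev : e v = Equiv.swap a b := if_pos hav
        have key : ∀ c, hamm (F w₁ v c) (F w₂ v (e v c)) ≤ 1 + if c = b then 1 else 0 := by
          intro c
          by_cases hcb : c = b
          · simpa [hcb] using h2 v c (e v c)
          by_cases hca : c = a
          · have h1' : ¬ validCol G (Function.update w₁ v c) := by
              rw [validCol_update_iff G h₁]
              push_neg
              exact ⟨v₀, hav, hca.symm⟩
            have hswap : e v c = b := by
              rw [hev, hca]; exact Equiv.swap_apply_left a b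
            have h2' : ¬ validCol G (Function.update w₂ v b) := by
              rw [validCol_update_iff G h₂]
              push_neg
              exact ⟨v₀, hav, rfl⟩
            have hF1 : F w₁ v c = w₁ := if_neg h1'
            have hF2 : F w₂ v (e v c) = w₂ := by rw [hswap]; exact if_neg h2'
            rw [hF1, hF2, hadj]
            simp
          · have hswap : e v c = c := by
              rw [hev]; exact Equiv.swap_apply_of_ne_of_ne hca hcb
            rw [hswap]
            refine le_trans (hH1 v c hv (hiff v c ?_)) (by simp)
            intro u hu
            rcases eq_or_ne u v₀ with rfl | hu'
            · exact iff_of_true (fun h => hca h.symm) (fun h => hcb h.symm)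
            · rw [heq u hu']
        calc ∑ c, hamm (F w₁ v c) (F w₂ v (e v c))
            ≤ ∑ c, (1 + if c = b then 1 else 0) := Finset.sum_le_sum fun c _ => key c
          _ = Fintype.card C + 1 := by
              rw [Finset.sum_add_distrib, Finset.sum_const, Finset.sum_ite_eq' Finset.univ b
                fun _ => 1]
              simp
          _ = _ := by rw [if_pos hav]
      · have hev : e v = Equiv.refl C := if_neg hav
        have key : ∀ c, hamm (F w₁ v c) (F w₂ v (e v c)) ≤ 1 := by
          intro c
          rw [hev]; simp only [Equiv.refl_apply]
          refine hH1 v c hv (hiff v c ?_)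
          intro u hu
          have hu' : u ≠ v₀ := fun h => hav (h ▸ hu)
          rw [heq u hu']
        calc ∑ c, hamm (F w₁ v c) (F w₂ v (e v c))
            ≤ ∑ c, 1 := Finset.sum_le_sum fun c _ => key c
          _ = Fintype.card C := by simp
          _ ≤ _ := Nat.le_add_right _ _
    have Stot : ∑ v, ∑ c, hamm (F w₁ v c) (F w₂ v (e v c)) ≤
        (Fintype.card V - 1) * Fintype.card C + 2 * D := by
      rw [← Finset.sum_erase_add Finset.univ _ (Finset.mem_univ v₀)]
      have hA : ∑ v ∈ Finset.univ.erase v₀, ∑ c, hamm (F w₁ v c) (F w₂ v (e v c)) ≤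
          (Fintype.card V - 1) * Fintype.card C + D := by
        calc ∑ v ∈ Finset.univ.erase v₀, ∑ c, hamm (F w₁ v c) (F w₂ v (e v c))
            ≤ ∑ v ∈ Finset.univ.erase v₀, (Fintype.card C + if G.Adj v v₀ then 1 else 0) :=
              Finset.sum_le_sum fun v hv => hSv v (Finset.ne_of_mem_erase hv)
          _ = (Fintype.card V - 1) * Fintype.card C +
              ∑ v ∈ Finset.univ.erase v₀, (if G.Adj v v₀ then 1 else 0) := by
              rw [Finset.sum_add_distrib, Finset.sum_const,
                Finset.card_erase_of_mem (Finset.mem_univ v₀), Finset.card_univ, smul_eq_mul]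
          _ ≤ (Fintype.card V - 1) * Fintype.card C + D := by
              refine Nat.add_le_add_left ?_ _
              calc ∑ v ∈ Finset.univ.erase v₀, (if G.Adj v v₀ then 1 else 0)
                  = ((Finset.univ.erase v₀).filter fun v => G.Adj v v₀).card :=
                    (Finset.card_filter _ _).symm
                _ ≤ (G.neighborFinset v₀).card := Finset.card_le_card (fun v hv => by
                    simp only [Finset.mem_filter] at hv
                    exact (SimpleGraph.mem_neighborFinset _ _ _).mpr hv.2.symm)
                _ ≤ D := by rw [G.card_neighborFinset_eq_degree]; exact hdeg v₀
      refine le_trans (Nat.add_le_add hA hSv₀) (le_of_eq ?_)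
      rw [add_assoc, two_mul]
    have hE : (∑' p : (V → C) × (V → C), μ p * (hamm p.1 p.2 : ℝ≥0∞))
        = (Fintype.card V : ℝ≥0∞)⁻¹ * ((Fintype.card C : ℝ≥0∞)⁻¹ *
            ∑ v, ∑ c, (hamm (F w₁ v c) (F w₂ v (e v c)) : ℝ≥0∞)) := by
      rw [hμ, tsum_bind_mul]
      have inner : ∀ v : V, (∑' p : (V → C) × (V → C),
          ((PMF.uniformOfFintype C).bind fun c => PMF.pure (F w₁ v c, F w₂ v (e v c))) p *
            (hamm p.1 p.2 : ℝ≥0∞))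
          = (Fintype.card C : ℝ≥0∞)⁻¹ *
              ∑ c, (hamm (F w₁ v c) (F w₂ v (e v c)) : ℝ≥0∞) := by
        intro v
        rw [tsum_bind_mul]
        simp only [tsum_pure_mul, PMF.uniformOfFintype_apply]
        rw [ENNReal.tsum_mul_left, tsum_fintype]
      simp only [inner, PMF.uniformOfFintype_apply]
      rw [ENNReal.tsum_mul_left, tsum_fintype, ← Finset.mul_sum]
    rw [hE]
    refine le_trans ?_
      (final_arith (Fintype.card V) (Fintype.card C) D Fintype.card_pos Fintype.card_pos)
    gcongr
    calc (∑ v, ∑ c, (hamm (F w₁ v c) (F w₂ v (e v c)) : ℝ≥0∞))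
        = ((∑ v, ∑ c, hamm (F w₁ v c) (F w₂ v (e v c)) : ℕ) : ℝ≥0∞) := by push_cast; rfl
      _ ≤ _ := by exact_mod_cast Stot
end

section
/- Rapid mixing of the Glauber dynamics: assume k ≥ 2D + 1. Then, setting β = 1 - 1/n + 2D/(k·n), we have β < 1, and for every T : ℕ and every pair of valid colorings w₁, w₂, TV(glauberStep^{(T)}(w₁), glauberStep^{(T)}(w₂)) ≤ β^T · n. -/
open scoped ENNReal

/-- Total variation distance between two PMFs. -/
noncomputable def TV {A : Type*} (μ₁ μ₂ : PMF A) : ℝ :=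
  (1 / 2) * ∑' a, |(μ₁ a).toReal - (μ₂ a).toReal|

set_option linter.unusedSectionVars false
set_option maxHeartbeats 1000000
open Finset

namespace GlauberAux

section JPerm
variable {C : Type*} [DecidableEq C]


noncomputable def jfun (P Q : Finset C) (c : C) : C :=
  if hs : c ∈ P \ Q then
    if h : ((P \ Q).equivFin ⟨c, hs⟩ : ℕ) < (Q \ P).card then
      ((Q \ P).equivFin.symm ⟨((P \ Q).equivFin ⟨c, hs⟩ : ℕ), h⟩ : C)
    else c
  else if ht : c ∈ Q \ P then
    if h : ((Q \ P).equivFin ⟨c, ht⟩ : ℕ) < (P \ Q).card then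
      ((P \ Q).equivFin.symm ⟨((Q \ P).equivFin ⟨c, ht⟩ : ℕ), h⟩ : C)
    else c
  else c

lemma jfun_of_not_mem {P Q : Finset C} {c : C} (h1 : c ∉ P \ Q) (h2 : c ∉ Q \ P) :
    jfun P Q c = c := by
  simp [jfun, h1, h2]

lemma jfun_s_lt {P Q : Finset C} {c : C} (hs : c ∈ P \ Q)
    (h : ((P \ Q).equivFin ⟨c, hs⟩ : ℕ) < (Q \ P).card) :
    jfun P Q c = ((Q \ P).equivFin.symm ⟨((P \ Q).equivFin ⟨c, hs⟩ : ℕ), h⟩ : C) := by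
  rw [jfun, dif_pos hs, dif_pos h]

lemma jfun_s_ge {P Q : Finset C} {c : C} (hs : c ∈ P \ Q)
    (h : ¬ ((P \ Q).equivFin ⟨c, hs⟩ : ℕ) < (Q \ P).card) :
    jfun P Q c = c := by
  rw [jfun, dif_pos hs, dif_neg h]

/-- "not bad" = the coupled pair of proposals behaves coherently:
either both are rejected-or-accept the same color. -/
def jgood (P Q : Finset C) (c : C) : Prop :=
  (c ∈ P ∧ jfun P Q c ∈ Q) ∨ (jfun P Q c = c ∧ c ∉ P ∧ c ∉ Q)

noncomputable instance (P Q : Finset C) (c : C) : Decidable (jgood P Q c) := by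
  unfold jgood; infer_instance

noncomputable def junmatched (P Q : Finset C) : Finset C :=
  ((Finset.univ.filter fun i : Fin (P \ Q).card => ¬ (i : ℕ) < (Q \ P).card)).image
    (fun i => ((P \ Q).equivFin.symm i : C))

lemma jbad_subset [Fintype C] (P Q : Finset C) :
    (Finset.univ.filter fun c => ¬ jgood P Q c) ⊆ (Q \ P) ∪ junmatched P Q := by
  intro c hc
  rw [Finset.mem_filter] at hc
  have hbad := hc.2
  by_cases hs : c ∈ P \ Q
  · by_cases h : ((P \ Q).equivFin ⟨c, hs⟩ : ℕ) < (Q \ P).card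
    · exfalso
      apply hbad
      left
      refine ⟨(Finset.mem_sdiff.1 hs).1, ?_⟩
      rw [jfun_s_lt hs h]
      exact Finset.mem_sdiff.1 ((Q \ P).equivFin.symm ⟨_, h⟩).2 |>.1
    · apply Finset.mem_union_right
      rw [junmatched, Finset.mem_image]
      exact ⟨(P \ Q).equivFin ⟨c, hs⟩, Finset.mem_filter.2 ⟨Finset.mem_univ _, h⟩, by simp⟩
  · by_cases ht : c ∈ Q \ P
    · exact Finset.mem_union_left _ ht
    · exfalso
      apply hbad
      have hj : jfun P Q c = c := jfun_of_not_mem hs ht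
      by_cases hP : c ∈ P
      · have hQ : c ∈ Q := by
          by_contra hQ; exact hs (Finset.mem_sdiff.2 ⟨hP, hQ⟩)
        exact Or.inl ⟨hP, by rw [hj]; exact hQ⟩
      · have hQ : c ∉ Q := by
          intro hQ; exact ht (Finset.mem_sdiff.2 ⟨hQ, hP⟩)
        exact Or.inr ⟨hj, hP, hQ⟩

lemma junmatched_card (P Q : Finset C) :
    (junmatched P Q).card ≤ (P \ Q).card - (Q \ P).card := by
  classical
  set n := (P \ Q).card
  set m := (Q \ P).card
  have h1 : (junmatched P Q).card ≤
      ((Finset.univ.filter fun i : Fin n => ¬ (i : ℕ) < m)).card :=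
    Finset.card_image_le
  refine h1.trans ?_
  by_cases hnm : m ≤ n
  · have h2 : m ≤ ((Finset.univ.filter fun i : Fin n => (i : ℕ) < m)).card := by
      have : ∀ j : Fin m, (Fin.castLE hnm j) ∈
          (Finset.univ.filter fun i : Fin n => (i : ℕ) < m) := by
        intro j; simp [j.2]
      calc m = (Finset.univ : Finset (Fin m)).card := by simp
        _ ≤ _ := Finset.card_le_card_of_injOn (Fin.castLE hnm)
            (fun j _ => this j) (fun a _ b _ hab => by
              have := congrArg Fin.val hab; simpa [Fin.ext_iff] using this)
    have h3 : ((Finset.univ.filter fun i : Fin n => ¬ (i : ℕ) < m)).card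
        = n - ((Finset.univ.filter fun i : Fin n => (i : ℕ) < m)).card := by
      rw [Finset.filter_not, Finset.card_sdiff_of_subset (Finset.filter_subset _ _)]
      simp
    rw [h3]
    omega
  · have : ((Finset.univ.filter fun i : Fin n => ¬ (i : ℕ) < m)) = ∅ := by
      apply Finset.filter_false_of_mem
      intro i _
      push_neg
      exact i.2.trans_le (le_of_not_ge hnm)
    rw [this]
    simp

lemma jbad_card [Fintype C] (P Q : Finset C) :
    ((Finset.univ.filter fun c => ¬ jgood P Q c)).card ≤
      max (P \ Q).card (Q \ P).card := by
  have h := Finset.card_le_card (jbad_subset P Q)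
  refine h.trans ?_
  refine (Finset.card_union_le _ _).trans ?_
  have := junmatched_card P Q
  omega

lemma jfun_t_lt {P Q : Finset C} {c : C} (hs : c ∉ P \ Q) (ht : c ∈ Q \ P)
    (h : ((Q \ P).equivFin ⟨c, ht⟩ : ℕ) < (P \ Q).card) :
    jfun P Q c = ((P \ Q).equivFin.symm ⟨((Q \ P).equivFin ⟨c, ht⟩ : ℕ), h⟩ : C) := by
  rw [jfun, dif_neg hs, dif_pos ht, dif_pos h]

lemma jfun_t_ge {P Q : Finset C} {c : C} (hs : c ∉ P \ Q) (ht : c ∈ Q \ P)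
    (h : ¬ ((Q \ P).equivFin ⟨c, ht⟩ : ℕ) < (P \ Q).card) :
    jfun P Q c = c := by
  rw [jfun, dif_neg hs, dif_pos ht, dif_neg h]


lemma not_mem_sdiff_of_mem_sdiff {P Q : Finset C} {c : C} (h : c ∈ Q \ P) : c ∉ P \ Q :=
  fun h' => (Finset.mem_sdiff.1 h').2 (Finset.mem_sdiff.1 h).1

lemma jfun_involutive (P Q : Finset C) : Function.Involutive (jfun P Q) := by
  intro c
  by_cases hs : c ∈ P \ Q
  · by_cases h : ((P \ Q).equivFin ⟨c, hs⟩ : ℕ) < (Q \ P).card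
    · rw [jfun_s_lt hs h]
      set c' : {x // x ∈ Q \ P} := (Q \ P).equivFin.symm ⟨((P \ Q).equivFin ⟨c, hs⟩ : ℕ), h⟩
        with hc'
      have ht' : (c' : C) ∈ Q \ P := c'.2
      have hs' : (c' : C) ∉ P \ Q := not_mem_sdiff_of_mem_sdiff ht'
      have he : (Q \ P).equivFin ⟨(c' : C), ht'⟩ = ⟨((P \ Q).equivFin ⟨c, hs⟩ : ℕ), h⟩ := by
        have h0 : (⟨(c' : C), ht'⟩ : {x // x ∈ Q \ P}) = c' := rfl
        rw [h0, hc', Equiv.apply_symm_apply]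
      have hlt : (((P \ Q).equivFin ⟨c, hs⟩ : Fin (P \ Q).card) : ℕ) < (P \ Q).card :=
        ((P \ Q).equivFin ⟨c, hs⟩).2
      have hlt' : ((Q \ P).equivFin ⟨(c' : C), ht'⟩ : ℕ) < (P \ Q).card := by
        rw [he]; exact hlt
      rw [jfun_t_lt hs' ht' hlt']
      have h1 : (⟨((Q \ P).equivFin ⟨(c' : C), ht'⟩ : ℕ), hlt'⟩ : Fin (P \ Q).card)
          = (P \ Q).equivFin ⟨c, hs⟩ := by
        ext; simp [he]
      rw [h1, Equiv.symm_apply_apply]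
    · rw [jfun_s_ge hs h, jfun_s_ge hs h]
  · by_cases ht : c ∈ Q \ P
    · by_cases h : ((Q \ P).equivFin ⟨c, ht⟩ : ℕ) < (P \ Q).card
      · rw [jfun_t_lt hs ht h]
        set c' : {x // x ∈ P \ Q} := (P \ Q).equivFin.symm ⟨((Q \ P).equivFin ⟨c, ht⟩ : ℕ), h⟩
          with hc'
        have hs' : (c' : C) ∈ P \ Q := c'.2
        have he : (P \ Q).equivFin ⟨(c' : C), hs'⟩ = ⟨((Q \ P).equivFin ⟨c, ht⟩ : ℕ), h⟩ := by
          have h0 : (⟨(c' : C), hs'⟩ : {x // x ∈ P \ Q}) = c' := rfl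
          rw [h0, hc', Equiv.apply_symm_apply]
        have hlt : (((Q \ P).equivFin ⟨c, ht⟩ : Fin (Q \ P).card) : ℕ) < (Q \ P).card :=
          ((Q \ P).equivFin ⟨c, ht⟩).2
        have hlt' : ((P \ Q).equivFin ⟨(c' : C), hs'⟩ : ℕ) < (Q \ P).card := by
          rw [he]; exact hlt
        rw [jfun_s_lt hs' hlt']
        have h1 : (⟨((P \ Q).equivFin ⟨(c' : C), hs'⟩ : ℕ), hlt'⟩ : Fin (Q \ P).card)
            = (Q \ P).equivFin ⟨c, ht⟩ := by
          ext; simp [he]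
        rw [h1, Equiv.symm_apply_apply]
      · rw [jfun_t_ge hs ht h, jfun_t_ge hs ht h]
    · rw [jfun_of_not_mem hs ht, jfun_of_not_mem hs ht]

noncomputable def jperm (P Q : Finset C) : Equiv.Perm C := (jfun_involutive P Q).toPerm

lemma jperm_apply (P Q : Finset C) (c : C) : jperm P Q c = jfun P Q c := rfl

end JPerm

section Graph

variable {V C : Type*} [Fintype V] [DecidableEq V] [DecidableEq C] [Fintype C]
  (G : SimpleGraph V) [DecidableRel G.Adj]

def mv (x : V → C) (u : V) (c : C) : V → C :=
  if validCol G (Function.update x u c) then Function.update x u c else x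

lemma mv_apply_ne (x : V → C) (u : V) (c : C) {v : V} (hv : v ≠ u) :
    mv G x u c v = x v := by
  unfold mv; split
  · exact Function.update_of_ne hv _ _
  · rfl

lemma valid_update_iff {x : V → C} (hx : validCol G x) (u : V) (c : C) :
    validCol G (Function.update x u c) ↔ ∀ v ∈ G.neighborFinset u, x v ≠ c := by
  constructor
  · intro h v hv
    have hadj : G.Adj u v := (SimpleGraph.mem_neighborFinset G u v).1 hv
    have := h u v hadj
    rw [Function.update_self, Function.update_of_ne (G.ne_of_adj hadj).symm] at this
    exact fun hc => this (by rw [hc])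
  · intro h a b hadj
    rcases eq_or_ne a u with rfl | ha
    · have hb : b ≠ a := (G.ne_of_adj hadj).symm
      rw [Function.update_self, Function.update_of_ne hb]
      exact fun hc => h b ((SimpleGraph.mem_neighborFinset G a b).2 hadj) hc.symm
    · rw [Function.update_of_ne ha]
      rcases eq_or_ne b u with rfl | hb
      · rw [Function.update_self]
        exact h a ((SimpleGraph.mem_neighborFinset G b a).2 hadj.symm)
      · rw [Function.update_of_ne hb]
        exact hx a b hadj


lemma mv_valid {x : V → C} (hx : validCol G x) (u : V) (c : C) :
    validCol G (mv G x u c) := by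
  unfold mv; split
  · assumption
  · exact hx


lemma mv_of_not_forbidden {x : V → C} (hx : validCol G x) {u : V} {c : C}
    (h : c ∉ (G.neighborFinset u).image x) :
    mv G x u c = Function.update x u c := by
  have : validCol G (Function.update x u c) := by
    rw [valid_update_iff G hx]
    intro v hv hc
    exact h (Finset.mem_image.2 ⟨v, hv, hc⟩)
  rw [mv, if_pos this]


lemma mv_of_forbidden {x : V → C} (hx : validCol G x) {u : V} {c : C}
    (h : c ∈ (G.neighborFinset u).image x) :
    mv G x u c = x := by
  rw [mv, if_neg]
  intro hval
  rw [valid_update_iff G hx] at hval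
  obtain ⟨v, hv, hc⟩ := Finset.mem_image.1 h
  exact hval v hv hc


def dset (x y : V → C) : Finset V := Finset.univ.filter fun v => x v ≠ y v

lemma mem_dset {x y : V → C} {v : V} : v ∈ dset x y ↔ x v ≠ y v := by
  simp [dset]

def hdist (x y : V → C) : ℕ := (dset x y).card

/-- The forbidden color set at a vertex. -/
def nbrCol (x : V → C) (u : V) : Finset C := (G.neighborFinset u).image x

/-- Number of disagreeing neighbors. -/
def ndis (x y : V → C) (u : V) : ℕ := (G.neighborFinset u ∩ dset x y).card

lemma sdiff_nbrCol_card {x y : V → C} (u : V) :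
    ((nbrCol G x u) \ (nbrCol G y u)).card ≤ ndis G x y u := by
  have hsub : (nbrCol G x u) \ (nbrCol G y u) ⊆
      (G.neighborFinset u ∩ dset x y).image x := by
    intro a ha
    rw [Finset.mem_sdiff] at ha
    obtain ⟨v, hv, hva⟩ := Finset.mem_image.1 ha.1
    refine Finset.mem_image.2 ⟨v, Finset.mem_inter.2 ⟨hv, mem_dset.2 ?_⟩, hva⟩
    intro he
    exact ha.2 (Finset.mem_image.2 ⟨v, hv, he ▸ hva⟩)
  exact (Finset.card_le_card hsub).trans Finset.card_image_le

lemma sdiff_nbrCol_card' {x y : V → C} (u : V) :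
    ((nbrCol G y u) \ (nbrCol G x u)).card ≤ ndis G x y u := by
  have hsub : (nbrCol G y u) \ (nbrCol G x u) ⊆
      (G.neighborFinset u ∩ dset x y).image y := by
    intro a ha
    rw [Finset.mem_sdiff] at ha
    obtain ⟨v, hv, hva⟩ := Finset.mem_image.1 ha.1
    refine Finset.mem_image.2 ⟨v, Finset.mem_inter.2 ⟨hv, mem_dset.2 ?_⟩, hva⟩
    intro he
    exact ha.2 (Finset.mem_image.2 ⟨v, hv, he ▸ hva⟩)
  exact (Finset.card_le_card hsub).trans Finset.card_image_le

lemma dset_mv_subset (x y : V → C) (u : V) (c c' : C) :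
    dset (mv G x u c) (mv G y u c') ⊆ insert u (dset x y) := by
  intro v hv
  rcases eq_or_ne v u with rfl | hvu
  · exact Finset.mem_insert_self _ _
  · rw [mem_dset, mv_apply_ne G x u c hvu, mv_apply_ne G y u c' hvu] at hv
    exact Finset.mem_insert_of_mem (mem_dset.2 hv)

lemma dset_update_eq (x y : V → C) (u : V) (c : C) :
    dset (Function.update x u c) (Function.update y u c) = (dset x y).erase u := by
  ext v
  rcases eq_or_ne v u with rfl | hvu
  · simp [mem_dset]
  · rw [mem_dset, Function.update_of_ne hvu, Function.update_of_ne hvu,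
      Finset.mem_erase]
    simp [hvu, mem_dset]

/-- Pointwise bound: coalescing case. -/
lemma dist_mv_coalesce {x y : V → C} (hx : validCol G x) (hy : validCol G y)
    {u : V} (hu : u ∈ dset x y) {c : C}
    (hc : c ∉ nbrCol G x u ∪ nbrCol G y u) :
    (hdist (mv G x u c) (mv G y u (jfun (nbrCol G x u) (nbrCol G y u) c)) : ℝ)
      ≤ (hdist x y : ℝ) - 1 := by
  have hcA : c ∉ nbrCol G x u := fun h => hc (Finset.mem_union_left _ h)
  have hcB : c ∉ nbrCol G y u := fun h => hc (Finset.mem_union_right _ h)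
  have hj : jfun (nbrCol G x u) (nbrCol G y u) c = c :=
    jfun_of_not_mem (fun h => hcA (Finset.mem_sdiff.1 h).1)
      (fun h => hcB (Finset.mem_sdiff.1 h).1)
  rw [hj, mv_of_not_forbidden G hx hcA, mv_of_not_forbidden G hy hcB]
  have : hdist (Function.update x u c) (Function.update y u c) = hdist x y - 1 := by
    rw [hdist, dset_update_eq, Finset.card_erase_of_mem hu]; rfl
  rw [this]
  have h1 : 1 ≤ hdist x y := by
    rw [Nat.one_le_iff_ne_zero]
    intro h0
    rw [hdist, Finset.card_eq_zero] at h0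
    simp [h0] at hu
  push_cast [Nat.cast_sub h1]
  simp

/-- Pointwise bound: non-disagreeing vertex, good color. -/
lemma dist_mv_good {x y : V → C} (hx : validCol G x) (hy : validCol G y)
    {u : V} (hu : u ∉ dset x y) {c : C}
    (hc : jgood (nbrCol G x u) (nbrCol G y u) c) :
    hdist (mv G x u c) (mv G y u (jfun (nbrCol G x u) (nbrCol G y u) c)) ≤ hdist x y := by
  rcases hc with ⟨hcA, hcB⟩ | ⟨hj, hcA, hcB⟩
  · rw [mv_of_forbidden G hx hcA, mv_of_forbidden G hy hcB]
  · rw [hj, mv_of_not_forbidden G hx hcA, mv_of_not_forbidden G hy hcB, hdist,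
      dset_update_eq]
    exact Finset.card_le_card (Finset.erase_subset _ _)

/-- Pointwise bound: general. -/
lemma dist_mv_le (x y : V → C) (u : V) (c c' : C) :
    hdist (mv G x u c) (mv G y u c') ≤ hdist x y + 1 := by
  have := Finset.card_le_card (dset_mv_subset G x y u c c')
  exact this.trans (Finset.card_insert_le _ _)

lemma dist_mv_le_of_mem (x y : V → C) {u : V} (hu : u ∈ dset x y) (c c' : C) :
    hdist (mv G x u c) (mv G y u c') ≤ hdist x y := by
  have hsub : dset (mv G x u c) (mv G y u c') ⊆ dset x y := by
    have := dset_mv_subset G x y u c c'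
    rwa [Finset.insert_eq_self.2 hu] at this
  exact Finset.card_le_card hsub


variable (D : ℕ)

lemma card_nbrCol_le (hdeg : ∀ v, G.degree v ≤ D) (x : V → C) (u : V) :
    (nbrCol G x u).card ≤ D :=
  Finset.card_image_le.trans (by
    rw [SimpleGraph.card_neighborFinset_eq_degree]; exact hdeg u)

lemma sum_c_mem {x y : V → C} (hx : validCol G x) (hy : validCol G y)
    (hdeg : ∀ v, G.degree v ≤ D) {u : V} (hu : u ∈ dset x y) :
    ∑ c : C, (hdist (mv G x u c) (mv G y u (jfun (nbrCol G x u) (nbrCol G y u) c)) : ℝ)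
      ≤ (Fintype.card C : ℝ) * (hdist x y : ℝ) - Fintype.card C + D + ndis G x y u := by
  have hpt : ∀ c : C,
      (hdist (mv G x u c) (mv G y u (jfun (nbrCol G x u) (nbrCol G y u) c)) : ℝ)
        ≤ ((hdist x y : ℝ) - 1) + (if c ∈ nbrCol G x u ∪ nbrCol G y u then 1 else 0) := by
    intro c
    by_cases hc : c ∈ nbrCol G x u ∪ nbrCol G y u
    · rw [if_pos hc]
      have := dist_mv_le_of_mem G x y hu c (jfun (nbrCol G x u) (nbrCol G y u) c)
      have h2 : (hdist (mv G x u c) (mv G y u (jfun (nbrCol G x u) (nbrCol G y u) c)) : ℝ)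
          ≤ (hdist x y : ℝ) := by exact_mod_cast this
      linarith
    · rw [if_neg hc]
      have := dist_mv_coalesce G hx hy hu hc
      linarith
  calc ∑ c : C, (hdist (mv G x u c) (mv G y u (jfun (nbrCol G x u) (nbrCol G y u) c)) : ℝ)
      ≤ ∑ c : C, (((hdist x y : ℝ) - 1)
          + (if c ∈ nbrCol G x u ∪ nbrCol G y u then 1 else 0)) :=
        Finset.sum_le_sum fun c _ => hpt c
    _ = (Fintype.card C : ℝ) * ((hdist x y : ℝ) - 1)
          + ((nbrCol G x u ∪ nbrCol G y u).card : ℝ) := by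
        rw [Finset.sum_add_distrib, Finset.sum_const, Finset.card_univ, nsmul_eq_mul]
        congr 1
        rw [Finset.sum_ite_mem, Finset.univ_inter, Finset.sum_const, nsmul_eq_mul, mul_one]
    _ ≤ (Fintype.card C : ℝ) * (hdist x y : ℝ) - Fintype.card C + D + ndis G x y u := by
        have h1 : ((nbrCol G x u ∪ nbrCol G y u).card : ℝ) ≤ (D : ℝ) + ndis G x y u := by
          have hcard : (nbrCol G y u \ nbrCol G x u).card + (nbrCol G x u).card
              = (nbrCol G x u ∪ nbrCol G y u).card := by
            rw [Finset.card_sdiff_add_card, Finset.union_comm]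
          have h2 := sdiff_nbrCol_card' G (x := x) (y := y) u
          have h3 := card_nbrCol_le G D hdeg x u
          have : (nbrCol G x u ∪ nbrCol G y u).card ≤ D + ndis G x y u := by omega
          exact_mod_cast this
        ring_nf
        nlinarith [h1]

lemma sum_c_not_mem {x y : V → C} (hx : validCol G x) (hy : validCol G y)
    {u : V} (hu : u ∉ dset x y) :
    ∑ c : C, (hdist (mv G x u c) (mv G y u (jfun (nbrCol G x u) (nbrCol G y u) c)) : ℝ)
      ≤ (Fintype.card C : ℝ) * (hdist x y : ℝ) + ndis G x y u := by
  classical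
  have hpt : ∀ c : C,
      (hdist (mv G x u c) (mv G y u (jfun (nbrCol G x u) (nbrCol G y u) c)) : ℝ)
        ≤ (hdist x y : ℝ) + (if jgood (nbrCol G x u) (nbrCol G y u) c then 0 else 1) := by
    intro c
    by_cases hc : jgood (nbrCol G x u) (nbrCol G y u) c
    · rw [if_pos hc]
      have := dist_mv_good G hx hy hu hc
      have h2 : (hdist (mv G x u c) (mv G y u (jfun (nbrCol G x u) (nbrCol G y u) c)) : ℝ)
          ≤ (hdist x y : ℝ) := by exact_mod_cast this
      linarith
    · rw [if_neg hc]
      have := dist_mv_le G x y u c (jfun (nbrCol G x u) (nbrCol G y u) c)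
      have h2 : (hdist (mv G x u c) (mv G y u (jfun (nbrCol G x u) (nbrCol G y u) c)) : ℝ)
          ≤ (hdist x y : ℝ) + 1 := by exact_mod_cast this
      linarith
  calc ∑ c : C, (hdist (mv G x u c) (mv G y u (jfun (nbrCol G x u) (nbrCol G y u) c)) : ℝ)
      ≤ ∑ c : C, ((hdist x y : ℝ)
          + (if jgood (nbrCol G x u) (nbrCol G y u) c then 0 else 1)) :=
        Finset.sum_le_sum fun c _ => hpt c
    _ = (Fintype.card C : ℝ) * (hdist x y : ℝ)
          + ((Finset.univ.filter fun c => ¬ jgood (nbrCol G x u) (nbrCol G y u) c).card : ℝ) := by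
        rw [Finset.sum_add_distrib, Finset.sum_const, Finset.card_univ, nsmul_eq_mul]
        congr 1
        rw [Finset.sum_ite, Finset.sum_const, Finset.sum_const]
        simp
    _ ≤ (Fintype.card C : ℝ) * (hdist x y : ℝ) + ndis G x y u := by
        have h1 := jbad_card (nbrCol G x u) (nbrCol G y u)
        have h2 := sdiff_nbrCol_card G (x := x) (y := y) u
        have h3 := sdiff_nbrCol_card' G (x := x) (y := y) u
        have h4 : ((Finset.univ.filter fun c =>
            ¬ jgood (nbrCol G x u) (nbrCol G y u) c).card : ℕ) ≤ ndis G x y u :=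
          h1.trans (max_le h2 h3)
        have : ((Finset.univ.filter fun c =>
            ¬ jgood (nbrCol G x u) (nbrCol G y u) c).card : ℝ) ≤ ndis G x y u := by
          exact_mod_cast h4
        linarith

lemma sum_ndis_le {x y : V → C} (hdeg : ∀ v, G.degree v ≤ D) :
    ∑ u : V, (ndis G x y u : ℝ) ≤ (D : ℝ) * hdist x y := by
  have hnat : ∑ u : V, ndis G x y u ≤ D * hdist x y := by
    have h1 : ∀ u : V, ndis G x y u = ∑ v ∈ dset x y, if G.Adj u v then 1 else 0 := by
      intro u
      rw [ndis, ← Finset.card_filter]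
      congr 1
      ext v
      simp [SimpleGraph.mem_neighborFinset, and_comm]
    calc ∑ u : V, ndis G x y u
        = ∑ u : V, ∑ v ∈ dset x y, if G.Adj u v then 1 else 0 := by
          exact Finset.sum_congr rfl fun u _ => h1 u
      _ = ∑ v ∈ dset x y, ∑ u : V, if G.Adj u v then 1 else 0 := Finset.sum_comm
      _ = ∑ v ∈ dset x y, G.degree v := by
          refine Finset.sum_congr rfl fun v _ => ?_
          rw [← Finset.card_filter, ← SimpleGraph.card_neighborFinset_eq_degree]
          congr 1
          ext u
          simp [SimpleGraph.mem_neighborFinset, SimpleGraph.adj_comm]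
      _ ≤ ∑ _v ∈ dset x y, D := Finset.sum_le_sum fun v _ => hdeg v
      _ = D * hdist x y := by rw [Finset.sum_const, smul_eq_mul, mul_comm]; rfl
  exact_mod_cast hnat

/-- Master one-step bound: total sum over (u, c) of coupled distances. -/
lemma sum_uc_bound {x y : V → C} (hx : validCol G x) (hy : validCol G y)
    (hdeg : ∀ v, G.degree v ≤ D) :
    ∑ u : V, ∑ c : C,
        (hdist (mv G x u c) (mv G y u (jfun (nbrCol G x u) (nbrCol G y u) c)) : ℝ)
      ≤ (hdist x y : ℝ) *
        ((Fintype.card C : ℝ) * (Fintype.card V : ℝ) - Fintype.card C + 2 * D) := by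
  classical
  set k : ℝ := (Fintype.card C : ℝ)
  set n : ℝ := (Fintype.card V : ℝ)
  set d : ℝ := (hdist x y : ℝ)
  set S : Finset V := dset x y with hS
  set F : V → ℝ := fun u => ∑ c : C,
    (hdist (mv G x u c) (mv G y u (jfun (nbrCol G x u) (nbrCol G y u) c)) : ℝ) with hF
  have hsplit : ∑ u : V, F u = ∑ u ∈ S, F u + ∑ u ∈ Sᶜ, F u :=
    (Finset.sum_add_sum_compl S F).symm
  have hb1 : ∑ u ∈ S, F u ≤ ∑ u ∈ S, (k * d - k + D + ndis G x y u) :=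
    Finset.sum_le_sum fun u hu => sum_c_mem G D hx hy hdeg hu
  have hb2 : ∑ u ∈ Sᶜ, F u ≤ ∑ u ∈ Sᶜ, (k * d + ndis G x y u) :=
    Finset.sum_le_sum fun u hu => sum_c_not_mem G hx hy (Finset.mem_compl.1 hu)
  have hndis : ∑ u ∈ S, (ndis G x y u : ℝ) + ∑ u ∈ Sᶜ, (ndis G x y u : ℝ)
      ≤ (D : ℝ) * d := by
    rw [Finset.sum_add_sum_compl]
    exact sum_ndis_le G D hdeg
  have hcardS : (S.card : ℝ) = d := rfl
  have hcardSc : (Sᶜ.card : ℝ) = n - d := by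
    rw [Finset.card_compl]
    have hle : S.card ≤ Fintype.card V := Finset.card_le_univ S
    push_cast [Nat.cast_sub hle]
    rfl
  have e1 : ∑ u ∈ S, (k * d - k + D + ndis G x y u)
      = (S.card : ℝ) * (k * d - k + D) + ∑ u ∈ S, (ndis G x y u : ℝ) := by
    rw [Finset.sum_add_distrib, Finset.sum_const, nsmul_eq_mul]
  have e2 : ∑ u ∈ Sᶜ, (k * d + ndis G x y u)
      = (Sᶜ.card : ℝ) * (k * d) + ∑ u ∈ Sᶜ, (ndis G x y u : ℝ) := by
    rw [Finset.sum_add_distrib, Finset.sum_const, nsmul_eq_mul]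
  rw [hsplit]
  have := add_le_add hb1 hb2
  rw [e1, e2, hcardS, hcardSc] at this
  nlinarith [this, hndis]

lemma hdist_le_card (x y : V → C) : hdist x y ≤ Fintype.card V :=
  (Finset.card_filter_le _ _).trans_eq Finset.card_univ

lemma hdist_pos_of_ne {x y : V → C} (h : x ≠ y) : 1 ≤ hdist x y := by
  rw [Nat.one_le_iff_ne_zero]
  intro h0
  apply h
  funext v
  by_contra hv
  have hm : v ∈ dset x y := Finset.mem_filter.2 ⟨Finset.mem_univ _, hv⟩
  rw [hdist, Finset.card_eq_zero] at h0
  simp [h0] at hm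

end Graph

section Ex
variable {Ω Ω' : Type*} [Fintype Ω] [Fintype Ω']

/-- Expectation of a real function under a PMF on a fintype. -/
noncomputable def ex (μ : PMF Ω) (f : Ω → ℝ) : ℝ := ∑ a, (μ a).toReal * f a

lemma pmf_toReal_sum_eq_one (μ : PMF Ω) : ∑ a, (μ a).toReal = 1 := by
  have h := μ.tsum_coe
  rw [tsum_fintype] at h
  have := ENNReal.toReal_sum (s := (Finset.univ : Finset Ω)) (f := fun a => μ a)
    (fun a _ => PMF.apply_ne_top μ a)
  rw [h] at this
  simpa using this.symm

lemma ex_pure [DecidableEq Ω] (s : Ω) (f : Ω → ℝ) : ex (PMF.pure s) f = f s := by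
  unfold ex
  rw [Finset.sum_eq_single s]
  · simp [PMF.pure_apply]
  · intro b _ hb
    simp [PMF.pure_apply, hb]
  · simp

lemma bind_apply_toReal (μ : PMF Ω) (g : Ω → PMF Ω') (b : Ω') :
    ((μ.bind g) b).toReal = ∑ a, (μ a).toReal * ((g a) b).toReal := by
  rw [PMF.bind_apply, tsum_fintype, ENNReal.toReal_sum
    (fun a _ => ENNReal.mul_ne_top (PMF.apply_ne_top μ a) (PMF.apply_ne_top _ b))]
  exact Finset.sum_congr rfl fun a _ => ENNReal.toReal_mul

lemma ex_bind (μ : PMF Ω) (g : Ω → PMF Ω') (f : Ω' → ℝ) :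
    ex (μ.bind g) f = ∑ a, (μ a).toReal * ex (g a) f := by
  unfold ex
  calc ∑ b, ((μ.bind g) b).toReal * f b
      = ∑ b, ∑ a, (μ a).toReal * ((g a) b).toReal * f b := by
        refine Finset.sum_congr rfl fun b _ => ?_
        rw [bind_apply_toReal, Finset.sum_mul]
    _ = ∑ a, ∑ b, (μ a).toReal * ((g a) b).toReal * f b := Finset.sum_comm
    _ = ∑ a, (μ a).toReal * ∑ b, ((g a) b).toReal * f b := by
        refine Finset.sum_congr rfl fun a _ => ?_
        rw [Finset.mul_sum]
        exact Finset.sum_congr rfl fun b _ => by ring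

lemma ex_le_of_support (μ : PMF Ω) {f : Ω → ℝ} {g : Ω → ℝ}
    (h : ∀ a, μ a ≠ 0 → f a ≤ g a) : ex μ f ≤ ex μ g := by
  unfold ex
  refine Finset.sum_le_sum fun a _ => ?_
  by_cases ha : μ a = 0
  · simp [ha]
  · exact mul_le_mul_of_nonneg_left (h a ha) ENNReal.toReal_nonneg

lemma ex_const_mul (μ : PMF Ω) (r : ℝ) (f : Ω → ℝ) :
    ex μ (fun a => r * f a) = r * ex μ f := by
  unfold ex
  rw [Finset.mul_sum]
  exact Finset.sum_congr rfl fun a _ => by ring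

lemma map_apply_toReal [DecidableEq Ω'] (κ : PMF Ω) (f : Ω → Ω') (b : Ω') :
    ((κ.map f) b).toReal = ∑ q, if b = f q then (κ q).toReal else 0 := by
  rw [PMF.map_apply, tsum_fintype, ENNReal.toReal_sum]
  · refine Finset.sum_congr rfl fun q _ => ?_
    split <;> simp
  · intro q _
    split
    · exact PMF.apply_ne_top κ q
    · simp

/-- The coupling inequality: TV between marginals is at most the probability of
disagreement. -/
lemma TV_le_ex_ne {Ω : Type*} [Fintype Ω] [DecidableEq Ω] (κ : PMF (Ω × Ω)) :
    TV (κ.map Prod.fst) (κ.map Prod.snd)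
      ≤ ex κ (fun q => if q.1 = q.2 then 0 else 1) := by
  unfold TV
  rw [tsum_fintype]
  have hpt : ∀ a : Ω, |((κ.map Prod.fst) a).toReal - ((κ.map Prod.snd) a).toReal|
      ≤ ∑ q, (κ q).toReal *
          |(if a = q.1 then (1:ℝ) else 0) - (if a = q.2 then 1 else 0)| := by
    intro a
    rw [map_apply_toReal, map_apply_toReal, ← Finset.sum_sub_distrib]
    refine (Finset.abs_sum_le_sum_abs _ _).trans ?_
    refine Finset.sum_le_sum fun q _ => ?_
    have : (if a = q.1 then (κ q).toReal else 0) - (if a = q.2 then (κ q).toReal else 0)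
        = (κ q).toReal * ((if a = q.1 then (1:ℝ) else 0) - (if a = q.2 then 1 else 0)) := by
      split <;> split <;> ring
    rw [this, abs_mul, abs_of_nonneg ENNReal.toReal_nonneg]
  have hsum : ∀ q : Ω × Ω,
      ∑ a, |(if a = q.1 then (1:ℝ) else 0) - (if a = q.2 then 1 else 0)|
        = if q.1 = q.2 then 0 else 2 := by
    intro q
    by_cases h : q.1 = q.2
    · simp [h]
    · rw [if_neg h]
      have : ∀ a : Ω, |(if a = q.1 then (1:ℝ) else 0) - (if a = q.2 then 1 else 0)|
          = (if a = q.1 then (1:ℝ) else 0) + (if a = q.2 then 1 else 0) := by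
        intro a
        by_cases h1 : a = q.1 <;> by_cases h2 : a = q.2
        · exact absurd (h1 ▸ h2) (by exact fun hh => h (hh ▸ rfl))
        · simp [h1, h2, h, Ne.symm h]
        · simp [h1, h2, h, Ne.symm h]
        · simp [h1, h2]
      rw [Finset.sum_congr rfl fun a _ => this a, Finset.sum_add_distrib]
      have e1 : ∑ a : Ω, (if a = q.1 then (1:ℝ) else 0) = 1 := by
        rw [Finset.sum_ite_eq' Finset.univ q.1 (fun _ => (1:ℝ))]
        simp
      have e2 : ∑ a : Ω, (if a = q.2 then (1:ℝ) else 0) = 1 := by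
        rw [Finset.sum_ite_eq' Finset.univ q.2 (fun _ => (1:ℝ))]
        simp
      rw [e1, e2]
      norm_num
  calc (1/2 : ℝ) * ∑ a, |((κ.map Prod.fst) a).toReal - ((κ.map Prod.snd) a).toReal|
      ≤ (1/2) * ∑ a, ∑ q, (κ q).toReal *
          |(if a = q.1 then (1:ℝ) else 0) - (if a = q.2 then 1 else 0)| := by
        have := Finset.sum_le_sum (fun a (_ : a ∈ Finset.univ) => hpt a)
        linarith
    _ = (1/2) * ∑ q, (κ q).toReal *
          ∑ a, |(if a = q.1 then (1:ℝ) else 0) - (if a = q.2 then 1 else 0)| := by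
        rw [Finset.sum_comm]
        congr 1
        exact Finset.sum_congr rfl fun q _ => (Finset.mul_sum _ _ _).symm
    _ = ex κ (fun q => if q.1 = q.2 then 0 else 1) := by
        unfold ex
        rw [Finset.mul_sum]
        refine Finset.sum_congr rfl fun q _ => ?_
        rw [hsum q]
        by_cases h : q.1 = q.2 <;> simp [h] <;> ring
end Ex

section Coupling
variable {V C : Type*} [Fintype V] [Nonempty V] [DecidableEq V]
  [Fintype C] [Nonempty C] [DecidableEq C]
  (G : SimpleGraph V) [DecidableRel G.Adj]

/-- Jerrum's coupling of one Glauber step from two colorings. -/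
noncomputable def cstep (p : (V → C) × (V → C)) : PMF ((V → C) × (V → C)) :=
  (PMF.uniformOfFintype V).bind fun u =>
    (PMF.uniformOfFintype C).bind fun c =>
      PMF.pure (mv G p.1 u c, mv G p.2 u (jperm (nbrCol G p.1 u) (nbrCol G p.2 u) c))

lemma glauberStep_eq (w : V → C) :
    glauberStep G w = (PMF.uniformOfFintype V).bind fun u =>
      (PMF.uniformOfFintype C).bind fun c => PMF.pure (mv G w u c) := rfl

lemma bind_uniform_perm {Ω : Type*} (e : Equiv.Perm C) (g : C → PMF Ω) :
    ((PMF.uniformOfFintype C).bind fun c => g (e c))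
      = (PMF.uniformOfFintype C).bind g := by
  ext b
  rw [PMF.bind_apply, PMF.bind_apply]
  simp only [PMF.uniformOfFintype_apply]
  exact e.tsum_eq fun c => (Fintype.card C : ℝ≥0∞)⁻¹ * (g c) b

lemma cstep_fst (p : (V → C) × (V → C)) :
    (cstep G p).map Prod.fst = glauberStep G p.1 := by
  rw [cstep, glauberStep_eq, PMF.map_bind]
  refine congrArg _ (funext fun u => ?_)
  rw [PMF.map_bind]
  refine congrArg _ (funext fun c => ?_)
  rw [PMF.pure_map]

lemma cstep_snd (p : (V → C) × (V → C)) :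
    (cstep G p).map Prod.snd = glauberStep G p.2 := by
  rw [cstep, glauberStep_eq, PMF.map_bind]
  refine congrArg _ (funext fun u => ?_)
  rw [PMF.map_bind]
  have h1 : (fun c => PMF.map Prod.snd
      (PMF.pure (mv G p.1 u c, mv G p.2 u (jperm (nbrCol G p.1 u) (nbrCol G p.2 u) c))))
      = fun c => PMF.pure (mv G p.2 u (jperm (nbrCol G p.1 u) (nbrCol G p.2 u) c)) := by
    funext c
    rw [PMF.pure_map]
  rw [h1]
  exact bind_uniform_perm (jperm (nbrCol G p.1 u) (nbrCol G p.2 u))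
    (fun c => PMF.pure (mv G p.2 u c))

lemma cstep_support {p : (V → C) × (V → C)} (h1 : validCol G p.1) (h2 : validCol G p.2)
    {q : (V → C) × (V → C)} (hq : (cstep G p) q ≠ 0) :
    validCol G q.1 ∧ validCol G q.2 := by
  have hq' : q ∈ (cstep G p).support := hq
  rw [cstep] at hq'
  simp only [PMF.support_bind, PMF.support_pure, Set.mem_iUnion,
    Set.mem_singleton_iff] at hq'
  obtain ⟨u, -, c, -, rfl⟩ := hq'
  exact ⟨mv_valid G h1 u c, mv_valid G h2 u _⟩

/-- marginals of the iterated coupling -/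
lemma iter_zero {Ω : Type*} (f : Ω → PMF Ω) (s : Ω) : iter f 0 s = PMF.pure s := rfl

lemma iter_succ {Ω : Type*} (f : Ω → PMF Ω) (t : ℕ) (s : Ω) :
    iter f (t + 1) s = (iter f t s).bind f := rfl

lemma citer_fst (T : ℕ) (p : (V → C) × (V → C)) :
    (iter (cstep G) T p).map Prod.fst = iter (glauberStep G) T p.1 := by
  induction T with
  | zero => rw [iter_zero, iter_zero, PMF.pure_map]
  | succ t ih =>
      rw [iter_succ, iter_succ]
      calc PMF.map Prod.fst ((iter (cstep G) t p).bind (cstep G))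
          = (iter (cstep G) t p).bind (fun q => PMF.map Prod.fst (cstep G q)) :=
            PMF.map_bind _ _ _
        _ = (iter (cstep G) t p).bind ((glauberStep G) ∘ Prod.fst) :=
            congrArg _ (funext fun q => cstep_fst G q)
        _ = ((iter (cstep G) t p).map Prod.fst).bind (glauberStep G) :=
            (PMF.bind_map _ _ _).symm
        _ = (iter (glauberStep G) t p.1).bind (glauberStep G) := by rw [ih]

lemma citer_snd (T : ℕ) (p : (V → C) × (V → C)) :
    (iter (cstep G) T p).map Prod.snd = iter (glauberStep G) T p.2 := by
  induction T with
  | zero => rw [iter_zero, iter_zero, PMF.pure_map]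
  | succ t ih =>
      rw [iter_succ, iter_succ]
      calc PMF.map Prod.snd ((iter (cstep G) t p).bind (cstep G))
          = (iter (cstep G) t p).bind (fun q => PMF.map Prod.snd (cstep G q)) :=
            PMF.map_bind _ _ _
        _ = (iter (cstep G) t p).bind ((glauberStep G) ∘ Prod.snd) :=
            congrArg _ (funext fun q => cstep_snd G q)
        _ = ((iter (cstep G) t p).map Prod.snd).bind (glauberStep G) :=
            (PMF.bind_map _ _ _).symm
        _ = (iter (glauberStep G) t p.2).bind (glauberStep G) := by rw [ih]

lemma citer_support {p : (V → C) × (V → C)} (h1 : validCol G p.1) (h2 : validCol G p.2)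
    (T : ℕ) : ∀ q, (iter (cstep G) T p) q ≠ 0 → validCol G q.1 ∧ validCol G q.2 := by
  induction T with
  | zero =>
      intro q hq
      have : q ∈ (iter (cstep G) 0 p).support := hq
      rw [iter_zero, PMF.support_pure, Set.mem_singleton_iff] at this
      subst this
      exact ⟨h1, h2⟩
  | succ t ih =>
      intro q hq
      have : q ∈ (iter (cstep G) (t+1) p).support := hq
      rw [iter_succ] at this
      simp only [PMF.support_bind, Set.mem_iUnion] at this
      obtain ⟨r, hr, hq'⟩ := this
      obtain ⟨hr1, hr2⟩ := ih r hr
      exact cstep_support G hr1 hr2 hq'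

end Coupling

section Contraction
variable {V C : Type*} [Fintype V] [Nonempty V] [DecidableEq V]
  [Fintype C] [Nonempty C] [DecidableEq C]
  (G : SimpleGraph V) [DecidableRel G.Adj] (D : ℕ)

lemma uniform_toReal_V (u : V) :
    ((PMF.uniformOfFintype V) u).toReal = (Fintype.card V : ℝ)⁻¹ := by
  rw [PMF.uniformOfFintype_apply, ENNReal.toReal_inv, ENNReal.toReal_natCast]

lemma uniform_toReal_C (c : C) :
    ((PMF.uniformOfFintype C) c).toReal = (Fintype.card C : ℝ)⁻¹ := by
  rw [PMF.uniformOfFintype_apply, ENNReal.toReal_inv, ENNReal.toReal_natCast]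

lemma ex_cstep_le {p : (V → C) × (V → C)} (h1 : validCol G p.1) (h2 : validCol G p.2)
    (hdeg : ∀ v, G.degree v ≤ D) :
    ex (cstep G p) (fun q => (hdist q.1 q.2 : ℝ))
      ≤ (1 - 1 / (Fintype.card V : ℝ) +
          2 * D / ((Fintype.card C : ℝ) * (Fintype.card V : ℝ))) * (hdist p.1 p.2 : ℝ) := by
  have hn : (0:ℝ) < Fintype.card V := by exact_mod_cast Fintype.card_pos
  have hk : (0:ℝ) < Fintype.card C := by exact_mod_cast Fintype.card_pos
  have einner : ∀ u : V,
      ex ((PMF.uniformOfFintype C).bind fun c => PMF.pure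
          (mv G p.1 u c, mv G p.2 u (jperm (nbrCol G p.1 u) (nbrCol G p.2 u) c)))
        (fun q => (hdist q.1 q.2 : ℝ))
      = (Fintype.card C : ℝ)⁻¹ * ∑ c : C,
          (hdist (mv G p.1 u c)
            (mv G p.2 u (jfun (nbrCol G p.1 u) (nbrCol G p.2 u) c)) : ℝ) := by
    intro u
    rw [ex_bind, Finset.mul_sum]
    refine Finset.sum_congr rfl fun c _ => ?_
    rw [uniform_toReal_C, ex_pure, jperm_apply]
  have etot : ex (cstep G p) (fun q => (hdist q.1 q.2 : ℝ))
      = (Fintype.card V : ℝ)⁻¹ * ((Fintype.card C : ℝ)⁻¹ *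
          ∑ u : V, ∑ c : C,
            (hdist (mv G p.1 u c)
              (mv G p.2 u (jfun (nbrCol G p.1 u) (nbrCol G p.2 u) c)) : ℝ)) := by
    rw [cstep, ex_bind, Finset.mul_sum, Finset.mul_sum]
    refine Finset.sum_congr rfl fun u _ => ?_
    rw [uniform_toReal_V, einner u]
  rw [etot]
  have hbound := sum_uc_bound G D h1 h2 hdeg
  have hpos : (0:ℝ) ≤ (Fintype.card V : ℝ)⁻¹ * (Fintype.card C : ℝ)⁻¹ := by positivity
  calc (Fintype.card V : ℝ)⁻¹ * ((Fintype.card C : ℝ)⁻¹ *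
        ∑ u : V, ∑ c : C, (hdist (mv G p.1 u c)
          (mv G p.2 u (jfun (nbrCol G p.1 u) (nbrCol G p.2 u) c)) : ℝ))
      ≤ (Fintype.card V : ℝ)⁻¹ * ((Fintype.card C : ℝ)⁻¹ *
          ((hdist p.1 p.2 : ℝ) * ((Fintype.card C : ℝ) * (Fintype.card V : ℝ)
            - Fintype.card C + 2 * D))) := by
        have h2' := mul_le_mul_of_nonneg_left hbound (le_of_lt (inv_pos.2 hk))
        have h3' := mul_le_mul_of_nonneg_left h2' (le_of_lt (inv_pos.2 hn))
        exact h3'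
    _ = (1 - 1 / (Fintype.card V : ℝ) +
          2 * D / ((Fintype.card C : ℝ) * (Fintype.card V : ℝ))) * (hdist p.1 p.2 : ℝ) := by
        field_simp

lemma beta_nonneg :
    (0:ℝ) ≤ 1 - 1 / (Fintype.card V : ℝ) +
      2 * D / ((Fintype.card C : ℝ) * (Fintype.card V : ℝ)) := by
  have hn : (1:ℝ) ≤ Fintype.card V := by exact_mod_cast Fintype.card_pos
  have hk : (0:ℝ) < Fintype.card C := by exact_mod_cast Fintype.card_pos
  have h1 : 1 / (Fintype.card V : ℝ) ≤ 1 := by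
    rw [div_le_one (by linarith)]; exact hn
  have h2 : (0:ℝ) ≤ 2 * D / ((Fintype.card C : ℝ) * (Fintype.card V : ℝ)) := by
    positivity
  linarith

lemma ex_citer_le (hdeg : ∀ v, G.degree v ≤ D) (T : ℕ)
    {p : (V → C) × (V → C)} (h1 : validCol G p.1) (h2 : validCol G p.2) :
    ex (iter (cstep G) T p) (fun q => (hdist q.1 q.2 : ℝ))
      ≤ (1 - 1 / (Fintype.card V : ℝ) +
          2 * D / ((Fintype.card C : ℝ) * (Fintype.card V : ℝ))) ^ T
        * (hdist p.1 p.2 : ℝ) := by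
  set β : ℝ := 1 - 1 / (Fintype.card V : ℝ) +
      2 * D / ((Fintype.card C : ℝ) * (Fintype.card V : ℝ)) with hβ
  have hβ0 : (0:ℝ) ≤ β := beta_nonneg (V := V) (C := C) D
  induction T with
  | zero =>
      rw [iter_zero, ex_pure, pow_zero, one_mul]
  | succ t ih =>
      rw [iter_succ, ex_bind]
      have hstep : ∀ r : (V → C) × (V → C),
          ((iter (cstep G) t p) r).toReal * ex (cstep G r) (fun q => (hdist q.1 q.2 : ℝ))
            ≤ ((iter (cstep G) t p) r).toReal * (β * (hdist r.1 r.2 : ℝ)) := by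
        intro r
        by_cases hr : (iter (cstep G) t p) r = 0
        · rw [hr]; simp
        · obtain ⟨hr1, hr2⟩ := citer_support G h1 h2 t r hr
          exact mul_le_mul_of_nonneg_left (ex_cstep_le G D hr1 hr2 hdeg)
            ENNReal.toReal_nonneg
      calc ∑ r, ((iter (cstep G) t p) r).toReal * ex (cstep G r)
            (fun q => (hdist q.1 q.2 : ℝ))
          ≤ ∑ r, ((iter (cstep G) t p) r).toReal * (β * (hdist r.1 r.2 : ℝ)) :=
            Finset.sum_le_sum fun r _ => hstep r
        _ = β * ex (iter (cstep G) t p) (fun q => (hdist q.1 q.2 : ℝ)) := by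
            rw [ex, Finset.mul_sum]
            exact Finset.sum_congr rfl fun r _ => by ring
        _ ≤ β * (β ^ t * (hdist p.1 p.2 : ℝ)) := mul_le_mul_of_nonneg_left ih hβ0
        _ = β ^ (t + 1) * (hdist p.1 p.2 : ℝ) := by ring

end Contraction


end GlauberAux

/-- Rapid mixing of the Glauber dynamics when `k ≥ 2D + 1`: with
`β = 1 - 1/n + 2D/(kn) < 1`, the `T`-step distributions from any two valid colorings are
within total variation distance `β ^ T * n`. -/
theorem glauber_rapid_mixing {V C : Type*} [Fintype V] [Nonempty V] [DecidableEq V]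
    [Fintype C] [Nonempty C] [DecidableEq C]
    (G : SimpleGraph V) [DecidableRel G.Adj] (D : ℕ)
    (hdeg : ∀ v, G.degree v ≤ D) (hk : 2 * D + 1 ≤ Fintype.card C) :
    (1 - 1 / (Fintype.card V : ℝ) +
        2 * D / ((Fintype.card C : ℝ) * (Fintype.card V : ℝ))) < 1 ∧
      ∀ (T : ℕ) (w₁ w₂ : V → C), validCol G w₁ → validCol G w₂ →
        TV (iter (glauberStep G) T w₁) (iter (glauberStep G) T w₂) ≤
          (1 - 1 / (Fintype.card V : ℝ) +
              2 * D / ((Fintype.card C : ℝ) * (Fintype.card V : ℝ))) ^ T *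
            (Fintype.card V : ℝ) := by
  classical
  have hn : (0:ℝ) < Fintype.card V := by exact_mod_cast Fintype.card_pos
  have hkpos : (0:ℝ) < Fintype.card C := by exact_mod_cast Fintype.card_pos
  constructor
  · have h2D : (2*(D:ℝ)) < (Fintype.card C : ℝ) := by
      exact_mod_cast (by omega : 2*D < Fintype.card C)
    have hlt : 2 * (D:ℝ) / ((Fintype.card C : ℝ) * (Fintype.card V : ℝ))
        < 1 / (Fintype.card V : ℝ) := by
      rw [div_lt_div_iff₀ (by positivity) hn]
      nlinarith
    linarith
  · intro T w₁ w₂ h1 h2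
    have hfst := GlauberAux.citer_fst G T (w₁, w₂)
    have hsnd := GlauberAux.citer_snd G T (w₁, w₂)
    have hTV : TV (iter (glauberStep G) T w₁) (iter (glauberStep G) T w₂)
        = TV ((iter (GlauberAux.cstep G) T (w₁, w₂)).map Prod.fst)
            ((iter (GlauberAux.cstep G) T (w₁, w₂)).map Prod.snd) := by
      rw [hfst, hsnd]
    rw [hTV]
    refine le_trans (GlauberAux.TV_le_ex_ne _) ?_
    have hmono : GlauberAux.ex (iter (GlauberAux.cstep G) T (w₁, w₂))
          (fun q => if q.1 = q.2 then (0:ℝ) else 1)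
        ≤ GlauberAux.ex (iter (GlauberAux.cstep G) T (w₁, w₂))
          (fun q => (GlauberAux.hdist q.1 q.2 : ℝ)) := by
      refine GlauberAux.ex_le_of_support _ fun q _ => ?_
      by_cases hq : q.1 = q.2
      · rw [if_pos hq]
        exact_mod_cast Nat.zero_le _
      · rw [if_neg hq]
        exact_mod_cast GlauberAux.hdist_pos_of_ne hq
    refine hmono.trans ?_
    refine le_trans (GlauberAux.ex_citer_le G D hdeg T h1 h2) ?_
    refine mul_le_mul_of_nonneg_left ?_ ?_
    · exact_mod_cast GlauberAux.hdist_le_card w₁ w₂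
    · exact pow_nonneg (GlauberAux.beta_nonneg (V := V) (C := C) D) T
end
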